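/- arXiv:math/0406510 — 8 statements merged into one kernel-verified Lean document; each statement's English description precedes it below -/
import Mathlib

section
/- The flat torus ℝ²/ℤ² has the finite blocking property with at most 4 blocking points: for every pair of points O, A ∈ ℝ² there exists a finite set B ⊆ ℝ² with at most 4 elements such that no element of B is congruent to O or to A modulo ℤ², and for every v ∈ ℤ² with A + v ≠ O there exist t ∈ (0,1) and b ∈ B with O + t·(A + v − O) − b ∈ ℤ². -/
/-- A point of `ℝ²` lies in the integer lattice `ℤ²`. -/
def IsIntegerPoint (v : ℝ × ℝ) : Prop :=
  ∃ m n : ℤ, v = ((m : ℝ), (n : ℝ))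

/-- Every nonzero integer vector is `2^k` times a vector with an odd coordinate. -/
lemma exists_odd_rep (n : ℕ) : ∀ a b : ℤ, a.natAbs + b.natAbs ≤ n → (a ≠ 0 ∨ b ≠ 0) →
    ∃ (k : ℕ) (u v : ℤ), a = 2 ^ k * u ∧ b = 2 ^ k * v ∧ (Odd u ∨ Odd v) := by
  induction n with
  | zero =>
    intro a b h hab
    have : a = 0 ∧ b = 0 := by omega
    tauto
  | succ n ih =>
    intro a b h hab
    rcases Int.even_or_odd a with ⟨a', ha⟩ | ha
    · rcases Int.even_or_odd b with ⟨b', hb⟩ | hb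
      · have hab' : a' ≠ 0 ∨ b' ≠ 0 := by omega
        have hle : a'.natAbs + b'.natAbs ≤ n := by
          have h1 : a.natAbs = 2 * a'.natAbs := by
            have : a = 2 * a' := by omega
            rw [this, Int.natAbs_mul]; rfl
          have h2 : b.natAbs = 2 * b'.natAbs := by
            have : b = 2 * b' := by omega
            rw [this, Int.natAbs_mul]; rfl
          have : a'.natAbs ≠ 0 ∨ b'.natAbs ≠ 0 := by
            rcases hab' with h' | h'
            · exact Or.inl (by simpa using h')
            · exact Or.inr (by simpa using h')
          omega
        obtain ⟨k, u, v, h1, h2, h3⟩ := ih a' b' hle hab'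
        exact ⟨k + 1, u, v, by rw [ha, h1]; ring, by rw [hb, h2]; ring, h3⟩
      · exact ⟨0, a, b, by ring, by ring, Or.inr hb⟩
    · exact ⟨0, a, b, by ring, by ring, Or.inl ha⟩

lemma coord_calc_half (O1 A1 : ℝ) (vm p : ℤ) (c : ℝ) (hv : (vm : ℝ) = 2 * p + 2 * c) :
    O1 + (1 / 2) * (A1 + (vm : ℝ) - O1) - ((O1 + A1) / 2 + c) = (p : ℝ) := by
  rw [hv]; ring

lemma coord_calc (O1 A1 : ℝ) (dm vm u1 p : ℤ) (k : ℕ) (c : ℝ)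
    (hd1 : A1 - O1 = (dm : ℝ)) (h1 : dm + vm = 2 ^ k * u1) (hu : (u1 : ℝ) = 2 * p + 2 * c) :
    O1 + 1 / 2 ^ (k + 1) * (A1 + (vm : ℝ) - O1) - (O1 + c) = (p : ℝ) := by
  have e1 : (dm : ℝ) + (vm : ℝ) = 2 ^ k * (u1 : ℝ) := by exact_mod_cast h1
  have hA : A1 + (vm : ℝ) - O1 = 2 ^ k * (2 * (p : ℝ) + 2 * c) := by
    rw [← hu, ← e1]; linarith
  rw [hA, pow_succ]
  have hnz : (2 : ℝ) ^ k ≠ 0 := by positivity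
  field_simp
  ring

/-- The flat torus `ℝ²/ℤ²` has the finite blocking property with at most 4 blocking
points: for every pair of points `O, A ∈ ℝ²` there is a finite set `B ⊆ ℝ²` with at
most 4 elements, none of whose members is congruent to `O` or to `A` modulo `ℤ²`,
such that every geodesic from `O` to `A` (i.e. the projection of the segment from
`O` to `A + v` for `v ∈ ℤ²` with `A + v ≠ O`) has an interior point congruent
modulo `ℤ²` to a point of `B`. -/
theorem torus_finite_blocking_four_points (O A : ℝ × ℝ) :
    ∃ B : Finset (ℝ × ℝ), B.card ≤ 4 ∧
      (∀ b ∈ B, ¬ IsIntegerPoint (b - O) ∧ ¬ IsIntegerPoint (b - A)) ∧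
      (∀ v : ℝ × ℝ, IsIntegerPoint v → A + v ≠ O →
        ∃ t ∈ Set.Ioo (0 : ℝ) 1, ∃ b ∈ B,
          IsIntegerPoint (O + t • (A + v - O) - b)) := by
  obtain ⟨O1, O2⟩ := O
  obtain ⟨A1, A2⟩ := A
  by_cases hD : IsIntegerPoint ((A1, A2) - (O1, O2))
  · -- A ≡ O (mod ℤ²): use the three half-lattice points near O
    obtain ⟨dm, dn, hd⟩ := hD
    rw [Prod.mk_sub_mk, Prod.mk.injEq] at hd
    obtain ⟨hd1, hd2⟩ := hd
    refine ⟨{(O1 + 1/2, O2 + 0), (O1 + 0, O2 + 1/2), (O1 + 1/2, O2 + 1/2)}, ?_, ?_, ?_⟩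
    · have h1 := Finset.card_insert_le (O1 + 1/2, O2 + 0)
        ({(O1 + 0, O2 + 1/2), (O1 + 1/2, O2 + 1/2)} : Finset (ℝ × ℝ))
      have h2 := Finset.card_insert_le (O1 + 0, O2 + 1/2)
        ({(O1 + 1/2, O2 + 1/2)} : Finset (ℝ × ℝ))
      simp only [Finset.card_singleton] at *
      omega
    · intro b hb
      simp only [Finset.mem_insert, Finset.mem_singleton] at hb
      rcases hb with rfl | rfl | rfl
      · constructor
        · rintro ⟨m, n, h⟩
          rw [Prod.mk_sub_mk, Prod.mk.injEq] at h
          have : (2 * m : ℤ) = 1 := by exact_mod_cast (show (2 * (m : ℝ)) = 1 by linarith [h.1])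
          omega
        · rintro ⟨m, n, h⟩
          rw [Prod.mk_sub_mk, Prod.mk.injEq] at h
          have hr : 2 * ((m : ℝ) + dm) = 1 := by linarith [h.1, hd1]
          have : (2 * (m + dm) : ℤ) = 1 := by exact_mod_cast hr
          omega
      · constructor
        · rintro ⟨m, n, h⟩
          rw [Prod.mk_sub_mk, Prod.mk.injEq] at h
          have : (2 * n : ℤ) = 1 := by exact_mod_cast (show (2 * (n : ℝ)) = 1 by linarith [h.2])
          omega
        · rintro ⟨m, n, h⟩
          rw [Prod.mk_sub_mk, Prod.mk.injEq] at h
          have hr : 2 * ((n : ℝ) + dn) = 1 := by linarith [h.2, hd2]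
          have : (2 * (n + dn) : ℤ) = 1 := by exact_mod_cast hr
          omega
      · constructor
        · rintro ⟨m, n, h⟩
          rw [Prod.mk_sub_mk, Prod.mk.injEq] at h
          have : (2 * m : ℤ) = 1 := by exact_mod_cast (show (2 * (m : ℝ)) = 1 by linarith [h.1])
          omega
        · rintro ⟨m, n, h⟩
          rw [Prod.mk_sub_mk, Prod.mk.injEq] at h
          have hr : 2 * ((m : ℝ) + dm) = 1 := by linarith [h.1, hd1]
          have : (2 * (m + dm) : ℤ) = 1 := by exact_mod_cast hr
          omega
    · intro v hv hne
      obtain ⟨vm, vn, rfl⟩ := hv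
      have hw : dm + vm ≠ 0 ∨ dn + vn ≠ 0 := by
        by_contra hcon
        push_neg at hcon
        apply hne
        have e1 : (dm : ℝ) + (vm : ℝ) = 0 := by exact_mod_cast hcon.1
        have e2 : (dn : ℝ) + (vn : ℝ) = 0 := by exact_mod_cast hcon.2
        rw [Prod.mk_add_mk, Prod.mk.injEq]
        constructor <;> linarith
      obtain ⟨k, u1, u2, h1, h2, hodd⟩ :=
        exists_odd_rep ((dm + vm).natAbs + (dn + vn).natAbs) (dm + vm) (dn + vn) le_rfl hw
      have ht0 : (0 : ℝ) < 1 / 2 ^ (k + 1) := by positivity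
      have ht1 : (1 : ℝ) / 2 ^ (k + 1) < 1 := by
        rw [div_lt_one (by positivity)]
        calc (1 : ℝ) < 2 := one_lt_two
        _ ≤ 2 ^ (k + 1) := by
            calc (2 : ℝ) = 2 ^ 1 := (pow_one 2).symm
            _ ≤ 2 ^ (k + 1) := pow_le_pow_right₀ one_le_two (by omega)
      refine ⟨1 / 2 ^ (k + 1), ⟨ht0, ht1⟩, ?_⟩
      rcases Int.even_or_odd u1 with ⟨p, hp⟩ | ⟨p, hp⟩ <;>
        rcases Int.even_or_odd u2 with ⟨q, hq⟩ | ⟨q, hq⟩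
      · exfalso
        rcases hodd with ⟨r, hr⟩ | ⟨r, hr⟩ <;> omega
      · refine ⟨(O1 + 0, O2 + 1/2), by simp, p, q, ?_⟩
        simp only [Prod.mk_add_mk, Prod.mk_sub_mk, Prod.smul_mk, smul_eq_mul, Prod.mk.injEq]
        exact ⟨coord_calc O1 A1 dm vm u1 p k 0 hd1 h1 (by push_cast [hp]; ring),
               coord_calc O2 A2 dn vn u2 q k (1/2) hd2 h2 (by push_cast [hq]; ring)⟩
      · refine ⟨(O1 + 1/2, O2 + 0), by simp, p, q, ?_⟩
        simp only [Prod.mk_add_mk, Prod.mk_sub_mk, Prod.smul_mk, smul_eq_mul, Prod.mk.injEq]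
        exact ⟨coord_calc O1 A1 dm vm u1 p k (1/2) hd1 h1 (by push_cast [hp]; ring),
               coord_calc O2 A2 dn vn u2 q k 0 hd2 h2 (by push_cast [hq]; ring)⟩
      · refine ⟨(O1 + 1/2, O2 + 1/2), by simp, p, q, ?_⟩
        simp only [Prod.mk_add_mk, Prod.mk_sub_mk, Prod.smul_mk, smul_eq_mul, Prod.mk.injEq]
        exact ⟨coord_calc O1 A1 dm vm u1 p k (1/2) hd1 h1 (by push_cast [hp]; ring),
               coord_calc O2 A2 dn vn u2 q k (1/2) hd2 h2 (by push_cast [hq]; ring)⟩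
  · -- A ≢ O: use the four "midpoints"
    refine ⟨{((O1 + A1)/2 + 0, (O2 + A2)/2 + 0), ((O1 + A1)/2 + 1/2, (O2 + A2)/2 + 0),
             ((O1 + A1)/2 + 0, (O2 + A2)/2 + 1/2),
             ((O1 + A1)/2 + 1/2, (O2 + A2)/2 + 1/2)}, ?_, ?_, ?_⟩
    · have h1 := Finset.card_insert_le ((O1 + A1)/2 + 0, (O2 + A2)/2 + 0)
        ({((O1 + A1)/2 + 1/2, (O2 + A2)/2 + 0), ((O1 + A1)/2 + 0, (O2 + A2)/2 + 1/2),
          ((O1 + A1)/2 + 1/2, (O2 + A2)/2 + 1/2)} : Finset (ℝ × ℝ))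
      have h2 := Finset.card_insert_le ((O1 + A1)/2 + 1/2, (O2 + A2)/2 + 0)
        ({((O1 + A1)/2 + 0, (O2 + A2)/2 + 1/2),
          ((O1 + A1)/2 + 1/2, (O2 + A2)/2 + 1/2)} : Finset (ℝ × ℝ))
      have h3 := Finset.card_insert_le ((O1 + A1)/2 + 0, (O2 + A2)/2 + 1/2)
        ({((O1 + A1)/2 + 1/2, (O2 + A2)/2 + 1/2)} : Finset (ℝ × ℝ))
      simp only [Finset.card_singleton] at *
      omega
    · intro b hb
      simp only [Finset.mem_insert, Finset.mem_singleton] at hb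
      rcases hb with rfl | rfl | rfl | rfl
      · constructor
        · rintro ⟨m, n, h⟩
          rw [Prod.mk_sub_mk, Prod.mk.injEq] at h
          refine hD ⟨2*m, 2*n, ?_⟩
          rw [Prod.mk_sub_mk, Prod.mk.injEq]
          push_cast
          exact ⟨by linarith [h.1], by linarith [h.2]⟩
        · rintro ⟨m, n, h⟩
          rw [Prod.mk_sub_mk, Prod.mk.injEq] at h
          refine hD ⟨-2*m, -2*n, ?_⟩
          rw [Prod.mk_sub_mk, Prod.mk.injEq]
          push_cast
          exact ⟨by linarith [h.1], by linarith [h.2]⟩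
      · constructor
        · rintro ⟨m, n, h⟩
          rw [Prod.mk_sub_mk, Prod.mk.injEq] at h
          refine hD ⟨2*m - 1, 2*n, ?_⟩
          rw [Prod.mk_sub_mk, Prod.mk.injEq]
          push_cast
          exact ⟨by linarith [h.1], by linarith [h.2]⟩
        · rintro ⟨m, n, h⟩
          rw [Prod.mk_sub_mk, Prod.mk.injEq] at h
          refine hD ⟨1 - 2*m, -2*n, ?_⟩
          rw [Prod.mk_sub_mk, Prod.mk.injEq]
          push_cast
          exact ⟨by linarith [h.1], by linarith [h.2]⟩
      · constructor
        · rintro ⟨m, n, h⟩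
          rw [Prod.mk_sub_mk, Prod.mk.injEq] at h
          refine hD ⟨2*m, 2*n - 1, ?_⟩
          rw [Prod.mk_sub_mk, Prod.mk.injEq]
          push_cast
          exact ⟨by linarith [h.1], by linarith [h.2]⟩
        · rintro ⟨m, n, h⟩
          rw [Prod.mk_sub_mk, Prod.mk.injEq] at h
          refine hD ⟨-2*m, 1 - 2*n, ?_⟩
          rw [Prod.mk_sub_mk, Prod.mk.injEq]
          push_cast
          exact ⟨by linarith [h.1], by linarith [h.2]⟩
      · constructor
        · rintro ⟨m, n, h⟩
          rw [Prod.mk_sub_mk, Prod.mk.injEq] at h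
          refine hD ⟨2*m - 1, 2*n - 1, ?_⟩
          rw [Prod.mk_sub_mk, Prod.mk.injEq]
          push_cast
          exact ⟨by linarith [h.1], by linarith [h.2]⟩
        · rintro ⟨m, n, h⟩
          rw [Prod.mk_sub_mk, Prod.mk.injEq] at h
          refine hD ⟨1 - 2*m, 1 - 2*n, ?_⟩
          rw [Prod.mk_sub_mk, Prod.mk.injEq]
          push_cast
          exact ⟨by linarith [h.1], by linarith [h.2]⟩
    · intro v hv _
      obtain ⟨vm, vn, rfl⟩ := hv
      refine ⟨1/2, ⟨by norm_num, by norm_num⟩, ?_⟩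
      rcases Int.even_or_odd vm with ⟨p, hp⟩ | ⟨p, hp⟩ <;>
        rcases Int.even_or_odd vn with ⟨q, hq⟩ | ⟨q, hq⟩
      · refine ⟨((O1 + A1)/2 + 0, (O2 + A2)/2 + 0), by simp, p, q, ?_⟩
        simp only [Prod.mk_add_mk, Prod.mk_sub_mk, Prod.smul_mk, smul_eq_mul, Prod.mk.injEq]
        exact ⟨coord_calc_half O1 A1 vm p 0 (by push_cast [hp]; ring),
               coord_calc_half O2 A2 vn q 0 (by push_cast [hq]; ring)⟩
      · refine ⟨((O1 + A1)/2 + 0, (O2 + A2)/2 + 1/2), by simp, p, q, ?_⟩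
        simp only [Prod.mk_add_mk, Prod.mk_sub_mk, Prod.smul_mk, smul_eq_mul, Prod.mk.injEq]
        exact ⟨coord_calc_half O1 A1 vm p 0 (by push_cast [hp]; ring),
               coord_calc_half O2 A2 vn q (1/2) (by push_cast [hq]; ring)⟩
      · refine ⟨((O1 + A1)/2 + 1/2, (O2 + A2)/2 + 0), by simp, p, q, ?_⟩
        simp only [Prod.mk_add_mk, Prod.mk_sub_mk, Prod.smul_mk, smul_eq_mul, Prod.mk.injEq]
        exact ⟨coord_calc_half O1 A1 vm p (1/2) (by push_cast [hp]; ring),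
               coord_calc_half O2 A2 vn q 0 (by push_cast [hq]; ring)⟩
      · refine ⟨((O1 + A1)/2 + 1/2, (O2 + A2)/2 + 1/2), by simp, p, q, ?_⟩
        simp only [Prod.mk_add_mk, Prod.mk_sub_mk, Prod.smul_mk, smul_eq_mul, Prod.mk.injEq]
        exact ⟨coord_calc_half O1 A1 vm p (1/2) (by push_cast [hp]; ring),
               coord_calc_half O2 A2 vn q (1/2) (by push_cast [hq]; ring)⟩
end

section
/- Let O, A ∈ ℝ² with A − O ∉ ℤ². For i, j ∈ {0,1} set M_{i,j} = (O + A)/2 + (i/2, j/2). Then none of the four points M_{i,j} is congruent to O or to A modulo ℤ², and for every v ∈ ℤ² the midpoint O + (1/2)·(A + v − O) of the segment from O to A + v is congruent modulo ℤ² to M_{i,j} for some i, j ∈ {0,1}. In particular the four points M_{i,j} block every geodesic from O to A on the flat torus ℝ²/ℤ². -/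
/-- Let `O, A ∈ ℝ²` with `A − O ∉ ℤ²`, and for `i, j ∈ {0,1}` set
`M i j = (O + A)/2 + (i/2, j/2)`.  Then none of the four points `M i j` is congruent
to `O` or to `A` modulo `ℤ²`; for every `v ∈ ℤ²` the midpoint `O + (1/2)(A + v − O)`
of the segment from `O` to `A + v` is congruent modulo `ℤ²` to some `M i j`; and in
particular the four points `M i j` block every geodesic from `O` to `A` on the flat
torus `ℝ²/ℤ²`. -/
theorem four_midpoints_block (O A : ℝ × ℝ)
    (hOA : ¬ IsIntegerPoint (A - O))
    (M : Fin 2 → Fin 2 → ℝ × ℝ)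
    (hM : ∀ i j : Fin 2,
      M i j = ((1 : ℝ) / 2) • (O + A) + (((i : ℕ) : ℝ) / 2, ((j : ℕ) : ℝ) / 2)) :
    (∀ i j : Fin 2, ¬ IsIntegerPoint (M i j - O) ∧ ¬ IsIntegerPoint (M i j - A)) ∧
    (∀ v : ℝ × ℝ, IsIntegerPoint v →
      ∃ i j : Fin 2, IsIntegerPoint (O + ((1 : ℝ) / 2) • (A + v - O) - M i j)) ∧
    (∀ v : ℝ × ℝ, IsIntegerPoint v → A + v ≠ O →
      ∃ t ∈ Set.Ioo (0 : ℝ) 1, ∃ i j : Fin 2,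
        IsIntegerPoint (O + t • (A + v - O) - M i j)) := by
  have key : ∀ v : ℝ × ℝ, IsIntegerPoint v →
      ∃ i j : Fin 2, IsIntegerPoint (O + ((1 : ℝ) / 2) • (A + v - O) - M i j) := by
    rintro v ⟨m, n, rfl⟩
    refine ⟨⟨(m % 2).toNat, by omega⟩, ⟨(n % 2).toNat, by omega⟩, m / 2, n / 2, ?_⟩
    rw [hM]
    have hm : (2 : ℤ) * (m / 2) + m % 2 = m := Int.mul_ediv_add_emod m 2
    have hn : (2 : ℤ) * (n / 2) + n % 2 = n := Int.mul_ediv_add_emod n 2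
    have hm' : ((m % 2).toNat : ℤ) = m % 2 := Int.toNat_of_nonneg (by omega)
    have hn' : ((n % 2).toNat : ℤ) = n % 2 := Int.toNat_of_nonneg (by omega)
    have e1 : (((m % 2).toNat : ℕ) : ℝ) = ((m % 2 : ℤ) : ℝ) := by
      exact_mod_cast congrArg (Int.cast : ℤ → ℝ) hm'
    have e2 : (((n % 2).toNat : ℕ) : ℝ) = ((n % 2 : ℤ) : ℝ) := by
      exact_mod_cast congrArg (Int.cast : ℤ → ℝ) hn'
    refine Prod.ext ?_ ?_ <;>
      simp only [Prod.fst_add, Prod.snd_add, Prod.fst_sub, Prod.snd_sub,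
        Prod.smul_fst, Prod.smul_snd, smul_eq_mul, Fin.val_mk, e1, e2]
    · have : ((2 : ℤ) * (m / 2) + m % 2 : ℤ) = (m : ℤ) := hm
      have h := congrArg (fun z : ℤ => (z : ℝ)) this
      push_cast at h ⊢
      linarith
    · have : ((2 : ℤ) * (n / 2) + n % 2 : ℤ) = (n : ℤ) := hn
      have h := congrArg (fun z : ℤ => (z : ℝ)) this
      push_cast at h ⊢
      linarith
  refine ⟨?_, key, ?_⟩
  · intro i j
    constructor
    · rintro ⟨m, n, h⟩
      apply hOA
      refine ⟨2 * m - (i : ℕ), 2 * n - (j : ℕ), ?_⟩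
      rw [hM] at h
      have h1 := congrArg Prod.fst h
      have h2 := congrArg Prod.snd h
      simp only [Prod.fst_add, Prod.snd_add, Prod.fst_sub, Prod.snd_sub,
        Prod.smul_fst, Prod.smul_snd, smul_eq_mul] at h1 h2
      refine Prod.ext ?_ ?_ <;>
        simp only [Prod.fst_sub, Prod.snd_sub] <;> push_cast <;>
        push_cast at h1 h2 <;> linarith
    · rintro ⟨m, n, h⟩
      apply hOA
      refine ⟨(i : ℕ) - 2 * m, (j : ℕ) - 2 * n, ?_⟩
      rw [hM] at h
      have h1 := congrArg Prod.fst h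
      have h2 := congrArg Prod.snd h
      simp only [Prod.fst_add, Prod.snd_add, Prod.fst_sub, Prod.snd_sub,
        Prod.smul_fst, Prod.smul_snd, smul_eq_mul] at h1 h2
      refine Prod.ext ?_ ?_ <;>
        simp only [Prod.fst_sub, Prod.snd_sub] <;> push_cast <;>
        push_cast at h1 h2 <;> linarith
  · intro v hv _
    exact ⟨1 / 2, by constructor <;> norm_num, key v hv⟩
end

section
/- For every v ∈ ℤ² with v ≠ 0 there exists t ∈ (0,1) such that t·v is congruent modulo ℤ² to one of the three points (1/2, 0), (0, 1/2), (1/2, 1/2). Consequently, for every O ∈ ℝ², every nonconstant closed geodesic of the flat torus ℝ²/ℤ² based at O passes through one of the three points O + (1/2, 0), O + (0, 1/2), O + (1/2, 1/2) taken modulo ℤ². -/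
/-- Helper: depending on parity of `a`, `a/2` minus `1/2` or `0` is an integer. -/
lemma half_case (a : ℤ) : (∃ k : ℤ, (a : ℝ) / 2 - 1 / 2 = k) ∨ (∃ k : ℤ, (a : ℝ) / 2 - 0 = k) := by
  rcases Int.even_or_odd a with ⟨k, hk⟩ | ⟨k, hk⟩
  · right; exact ⟨k, by subst hk; push_cast; ring⟩
  · left; exact ⟨k, by subst hk; push_cast; ring⟩

lemma main_lemma (m n : ℤ) (h : ¬(m = 0 ∧ n = 0)) :
    ∃ t ∈ Set.Ioo (0 : ℝ) 1,
      ∃ b ∈ ({((1 : ℝ) / 2, (0 : ℝ)), ((0 : ℝ), (1 : ℝ) / 2),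
              ((1 : ℝ) / 2, (1 : ℝ) / 2)} : Set (ℝ × ℝ)),
        IsIntegerPoint (t • (((m : ℝ), (n : ℝ)) : ℝ × ℝ) - b) := by
  set g : ℤ := (Int.gcd m n : ℤ) with hg
  have hg0 : g ≠ 0 := by
    simp only [hg, ne_eq, Nat.cast_eq_zero, Int.gcd_eq_zero_iff]
    exact h
  have hgpos : 0 < g := lt_of_le_of_ne (Int.natCast_nonneg _) (Ne.symm hg0)
  set m' : ℤ := m / g with hm'
  set n' : ℤ := n / g with hn'
  have hdm : g ∣ m := Int.gcd_dvd_left m n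
  have hdn : g ∣ n := Int.gcd_dvd_right m n
  have hmm : g * m' = m := Int.mul_ediv_cancel' hdm
  have hnn : g * n' = n := Int.mul_ediv_cancel' hdn
  have hcop : ¬ (Even m' ∧ Even n') := by
    rintro ⟨⟨a, ha⟩, ⟨b, hb⟩⟩
    have h2 : (2 : ℤ) ∣ m' ∧ (2:ℤ) ∣ n' := ⟨⟨a, by omega⟩, ⟨b, by omega⟩⟩
    have hgn : 0 < Int.gcd m n := Nat.pos_of_ne_zero (fun hh => hg0 (by simp [hg, hh]))
    have hgcd : Int.gcd m' n' = 1 := Int.gcd_div_gcd_div_gcd hgn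
    have hdd := Int.dvd_gcd h2.1 h2.2
    rw [hgcd] at hdd
    norm_num at hdd
  refine ⟨1 / (2 * g), ⟨by positivity, ?_⟩, ?_⟩
  · rw [div_lt_one (by positivity)]
    have : (1:ℝ) ≤ (g:ℝ) := by exact_mod_cast hgpos
    linarith
  · have hgR : (g : ℝ) ≠ 0 := by exact_mod_cast hg0
    have key : (1 / (2 * (g:ℝ))) • (((m : ℝ), (n : ℝ)) : ℝ × ℝ)
        = ((m' : ℝ) / 2, (n' : ℝ) / 2) := by
      have h1 : (m : ℝ) = (g : ℝ) * (m' : ℝ) := by exact_mod_cast hmm.symm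
      have h2 : (n : ℝ) = (g : ℝ) * (n' : ℝ) := by exact_mod_cast hnn.symm
      simp only [Prod.smul_mk, smul_eq_mul, h1, h2, Prod.mk.injEq]
      constructor <;> field_simp <;> ring
    rw [key]
    rcases Int.even_or_odd m' with ⟨a, ha⟩ | ⟨a, ha⟩ <;>
      rcases Int.even_or_odd n' with ⟨b, hb⟩ | ⟨b, hb⟩
    · exact absurd ⟨⟨a, ha⟩, ⟨b, hb⟩⟩ hcop
    · refine ⟨((0:ℝ), 1/2), by simp, a, b, ?_⟩
      rw [ha, hb]; simp only [Prod.mk_sub_mk, Prod.mk.injEq]; push_cast; constructor <;> ring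
    · refine ⟨((1:ℝ)/2, 0), by simp, a, b, ?_⟩
      rw [ha, hb]; simp only [Prod.mk_sub_mk, Prod.mk.injEq]; push_cast; constructor <;> ring
    · refine ⟨((1:ℝ)/2, 1/2), by simp, a, b, ?_⟩
      rw [ha, hb]; simp only [Prod.mk_sub_mk, Prod.mk.injEq]; push_cast; constructor <;> ring

/-- For every nonzero `v ∈ ℤ²` there exists `t ∈ (0,1)` such that `t • v` is
congruent modulo `ℤ²` to one of the three points `(1/2, 0)`, `(0, 1/2)`,
`(1/2, 1/2)`.  Consequently, for every `O ∈ ℝ²`, every nonconstant closed geodesic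
of the flat torus `ℝ²/ℤ²` based at `O` (the projection of the segment from `O` to
`O + v`, `v ∈ ℤ²`, `v ≠ 0`) passes through one of the three points `O + (1/2, 0)`,
`O + (0, 1/2)`, `O + (1/2, 1/2)` taken modulo `ℤ²`. -/
theorem three_points_block_closed_geodesics :
    (∀ v : ℝ × ℝ, IsIntegerPoint v → v ≠ 0 →
      ∃ t ∈ Set.Ioo (0 : ℝ) 1,
        ∃ b ∈ ({((1 : ℝ) / 2, (0 : ℝ)), ((0 : ℝ), (1 : ℝ) / 2),
                ((1 : ℝ) / 2, (1 : ℝ) / 2)} : Set (ℝ × ℝ)),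
          IsIntegerPoint (t • v - b)) ∧
    (∀ O : ℝ × ℝ, ∀ v : ℝ × ℝ, IsIntegerPoint v → v ≠ 0 →
      ∃ t ∈ Set.Ioo (0 : ℝ) 1,
        ∃ b ∈ ({((1 : ℝ) / 2, (0 : ℝ)), ((0 : ℝ), (1 : ℝ) / 2),
                ((1 : ℝ) / 2, (1 : ℝ) / 2)} : Set (ℝ × ℝ)),
          IsIntegerPoint ((O + t • v) - (O + b))) := by
  have main : ∀ v : ℝ × ℝ, IsIntegerPoint v → v ≠ 0 →
      ∃ t ∈ Set.Ioo (0 : ℝ) 1,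
        ∃ b ∈ ({((1 : ℝ) / 2, (0 : ℝ)), ((0 : ℝ), (1 : ℝ) / 2),
                ((1 : ℝ) / 2, (1 : ℝ) / 2)} : Set (ℝ × ℝ)),
          IsIntegerPoint (t • v - b) := by
    rintro v ⟨m, n, rfl⟩ hv
    apply main_lemma
    rintro ⟨rfl, rfl⟩
    exact hv (by simp [Prod.ext_iff])
  refine ⟨main, fun O v hv hv0 => ?_⟩
  obtain ⟨t, ht, b, hb, hib⟩ := main v hv hv0
  exact ⟨t, ht, b, hb, by simpa [add_sub_add_left_eq_sub] using hib⟩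
end

section
/- Let (v₁, v₂) be a basis of ℝ² over ℝ and let Λ = {m·v₁ + n·v₂ : m, n ∈ ℤ} be the associated lattice. Then the flat torus ℝ²/Λ has the finite blocking property with at most 4 blocking points: for every pair of points O, A ∈ ℝ² there exists a finite set B ⊆ ℝ² with at most 4 elements such that no element of B lies in (O + Λ) ∪ (A + Λ), and for every w ∈ Λ with A + w ≠ O there exist t ∈ (0,1) and b ∈ B with O + t·(A + w − O) − b ∈ Λ. -/
/-- Membership in the lattice spanned over `ℤ` by two vectors `v₁, v₂` of `ℝ²`. -/
def InLattice (v₁ v₂ w : ℝ × ℝ) : Prop :=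
  ∃ m n : ℤ, w = (m : ℝ) • v₁ + (n : ℝ) • v₂

/-- Extraction of the odd part of a pair of integers not both zero. -/
lemma aux_odd_part : ∀ N : ℕ, ∀ u v : ℤ, u.natAbs + v.natAbs ≤ N → ¬(u = 0 ∧ v = 0) →
    ∃ (K : ℕ) (c d : ℤ), u = 2^K * c ∧ v = 2^K * d ∧ ¬(2 ∣ c ∧ 2 ∣ d) := by
  intro N
  induction N with
  | zero => intro u v h hne; exfalso; apply hne; omega
  | succ N ih =>
    intro u v h hne
    by_cases hev : (2 ∣ u) ∧ (2 ∣ v)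
    · obtain ⟨⟨u', rfl⟩, ⟨v', rfl⟩⟩ := hev
      have hne' : ¬(u' = 0 ∧ v' = 0) := by rintro ⟨rfl, rfl⟩; exact hne ⟨by ring, by ring⟩
      have hb : u'.natAbs + v'.natAbs ≤ N := by
        have h1 : (2*u').natAbs = 2 * u'.natAbs := by rw [Int.natAbs_mul]; rfl
        have h2 : (2*v').natAbs = 2 * v'.natAbs := by rw [Int.natAbs_mul]; rfl
        have h3 : u'.natAbs + v'.natAbs ≠ 0 := by
          intro h0
          exact hne' ⟨Int.natAbs_eq_zero.mp (by omega), Int.natAbs_eq_zero.mp (by omega)⟩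
        omega
      obtain ⟨K, c, d, hc, hd, hcd⟩ := ih u' v' hb hne'
      exact ⟨K+1, c, d, by rw [hc]; ring, by rw [hd]; ring, hcd⟩
    · exact ⟨0, u, v, by ring, by ring, hev⟩

/-- Choice of parity shift for one coordinate, in the "even" case. -/
lemma coord_pick (γ : ℝ) (m c k : ℤ) (hγ : γ = 2*(k:ℝ) - m) :
    ∃ e : ℤ, (e = 0 ∨ e = 1) ∧ (∃ p : ℤ, (c:ℝ)/2 - (γ + e)/2 = p) ∧
      (∀ p' : ℤ, (γ + e)/2 = (p' : ℝ) → 2 ∣ c) := by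
  subst hγ
  rcases Int.even_or_odd (c + m) with ⟨j, hj⟩ | ⟨j, hj⟩
  · refine ⟨0, Or.inl rfl, ⟨j - k, ?_⟩, ?_⟩
    · have : (c:ℝ) + m = j + j := by exact_mod_cast congrArg (Int.cast : ℤ → ℝ) hj
      push_cast
      linarith
    · intro p' hp'
      have h1 : (2*(k:ℝ) - m + 0 : ℝ) = 2*p' := by push_cast at hp' ⊢; linarith
      have h2 : 2*k - m + 0 = 2*p' := by exact_mod_cast h1
      omega
  · refine ⟨1, Or.inr rfl, ⟨j - k, ?_⟩, ?_⟩
    · have : (c:ℝ) + m = 2*j + 1 := by exact_mod_cast congrArg (Int.cast : ℤ → ℝ) hj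
      push_cast
      linarith
    · intro p' hp'
      have h1 : (2*(k:ℝ) - m + 1 : ℝ) = 2*p' := by push_cast at hp' ⊢; linarith
      have h2 : 2*k - m + 1 = 2*p' := by exact_mod_cast h1
      omega

/-- Choice of parity shift for one coordinate, in the "generic" case (`t = 1/2`). -/
lemma coord_half (γ : ℝ) (m : ℤ) :
    ∃ e : ℤ, (e = 0 ∨ e = 1) ∧ (∃ p : ℤ, (γ + m)/2 - (γ + e)/2 = p) ∧
      (∀ p' : ℤ, (γ + e)/2 = (p' : ℝ) → ∃ k : ℤ, γ + m = 2*(k:ℝ)) := by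
  rcases Int.even_or_odd m with ⟨j, hj⟩ | ⟨j, hj⟩
  · refine ⟨0, Or.inl rfl, ⟨j, ?_⟩, ?_⟩
    · have : (m:ℝ) = j + j := by exact_mod_cast congrArg (Int.cast : ℤ → ℝ) hj
      push_cast
      linarith
    · intro p' hp'
      refine ⟨p' + j, ?_⟩
      have : (m:ℝ) = j + j := by exact_mod_cast congrArg (Int.cast : ℤ → ℝ) hj
      push_cast at hp' ⊢
      linarith
  · refine ⟨1, Or.inr rfl, ⟨j, ?_⟩, ?_⟩
    · have : (m:ℝ) = 2*j + 1 := by exact_mod_cast congrArg (Int.cast : ℤ → ℝ) hj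
      push_cast
      linarith
    · intro p' hp'
      refine ⟨p' + j, ?_⟩
      have : (m:ℝ) = 2*j + 1 := by exact_mod_cast congrArg (Int.cast : ℤ → ℝ) hj
      push_cast at hp' ⊢
      linarith

/-- Core arithmetic blocking lemma, in coordinates. -/
lemma aux_block (α β : ℝ) (m n : ℤ) (hne : ¬(α + m = 0 ∧ β + n = 0)) :
    ∃ t ∈ Set.Ioo (0:ℝ) 1, ∃ e d : ℤ, (e = 0 ∨ e = 1) ∧ (d = 0 ∨ d = 1) ∧
      (∃ p : ℤ, t * (α + m) - (α + e)/2 = p) ∧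
      (∃ q : ℤ, t * (β + n) - (β + d)/2 = q) ∧
      ¬((∃ p : ℤ, (α + e)/2 = (p:ℝ)) ∧ (∃ q : ℤ, (β + d)/2 = (q:ℝ))) := by
  by_cases hcase : (∃ k : ℤ, α + m = 2 * (k:ℝ)) ∧ (∃ l : ℤ, β + n = 2 * (l:ℝ))
  · obtain ⟨⟨k, hk⟩, ⟨l, hl⟩⟩ := hcase
    have hkl : ¬(2*k = 0 ∧ 2*l = 0) := by
      rintro ⟨h1, h2⟩
      apply hne
      constructor
      · rw [hk]; exact_mod_cast congrArg (Int.cast : ℤ → ℝ) h1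
      · rw [hl]; exact_mod_cast congrArg (Int.cast : ℤ → ℝ) h2
    obtain ⟨K, c, d, hc, hd, hcd⟩ := aux_odd_part ((2*k).natAbs + (2*l).natAbs) (2*k) (2*l)
      le_rfl hkl
    have ht : ((2:ℝ)^(K+1))⁻¹ ∈ Set.Ioo (0:ℝ) 1 := by
      constructor
      · positivity
      · rw [inv_lt_one_iff₀]
        right
        exact one_lt_pow₀ one_lt_two (Nat.succ_ne_zero K)
    have halfc : ((2:ℝ)^(K+1))⁻¹ * (α + m) = (c:ℝ) / 2 := by
      have h : α + m = ((2^K * c : ℤ) : ℝ) := by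
        rw [hk]; exact_mod_cast congrArg (Int.cast : ℤ → ℝ) hc
      rw [h]
      push_cast
      field_simp
      ring
    have halfd : ((2:ℝ)^(K+1))⁻¹ * (β + n) = (d:ℝ) / 2 := by
      have h : β + n = ((2^K * d : ℤ) : ℝ) := by
        rw [hl]; exact_mod_cast congrArg (Int.cast : ℤ → ℝ) hd
      rw [h]
      push_cast
      field_simp
      ring
    have hαk : α = 2*(k:ℝ) - m := by rw [← hk]; ring
    have hβl : β = 2*(l:ℝ) - n := by rw [← hl]; ring
    obtain ⟨e, he01, ⟨p, hp⟩, hPe⟩ := coord_pick α m c k hαk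
    obtain ⟨f, hf01, ⟨q, hq⟩, hPf⟩ := coord_pick β n d l hβl
    refine ⟨((2:ℝ)^(K+1))⁻¹, ht, e, f, he01, hf01, ⟨p, by rw [halfc]; exact hp⟩,
      ⟨q, by rw [halfd]; exact hq⟩, ?_⟩
    rintro ⟨⟨p', hp'⟩, ⟨q', hq'⟩⟩
    exact hcd ⟨hPe p' hp', hPf q' hq'⟩
  · obtain ⟨e, he01, ⟨p, hp⟩, hPe⟩ := coord_half α m
    obtain ⟨f, hf01, ⟨q, hq⟩, hPf⟩ := coord_half β n
    refine ⟨1/2, by norm_num, e, f, he01, hf01,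
      ⟨p, by rw [show (1:ℝ)/2 * (α+m) = (α+m)/2 by ring]; exact hp⟩,
      ⟨q, by rw [show (1:ℝ)/2 * (β+n) = (β+n)/2 by ring]; exact hq⟩, ?_⟩
    rintro ⟨⟨p', hp'⟩, ⟨q', hq'⟩⟩
    exact hcase ⟨hPe p' hp', hPf q' hq'⟩

/-- Let `(v₁, v₂)` be a basis of `ℝ²` over `ℝ` and `Λ = ℤv₁ + ℤv₂` the associated
lattice.  The flat torus `ℝ²/Λ` has the finite blocking property with at most 4
blocking points: for every pair `O, A ∈ ℝ²` there is a finite set `B ⊆ ℝ²` with at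
most 4 elements, disjoint from `(O + Λ) ∪ (A + Λ)`, such that every geodesic from
`O` to `A` (the projection of the segment from `O` to `A + w`, `w ∈ Λ`,
`A + w ≠ O`) has an interior point congruent modulo `Λ` to a point of `B`. -/
theorem lattice_torus_finite_blocking_four_points (v₁ v₂ : ℝ × ℝ)
    (hindep : LinearIndependent ℝ ![v₁, v₂])
    (hspan : Submodule.span ℝ ({v₁, v₂} : Set (ℝ × ℝ)) = ⊤)
    (O A : ℝ × ℝ) :
    ∃ B : Finset (ℝ × ℝ), B.card ≤ 4 ∧
      (∀ b ∈ B, ¬ InLattice v₁ v₂ (b - O) ∧ ¬ InLattice v₁ v₂ (b - A)) ∧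
      (∀ w : ℝ × ℝ, InLattice v₁ v₂ w → A + w ≠ O →
        ∃ t ∈ Set.Ioo (0 : ℝ) 1, ∃ b ∈ B,
          InLattice v₁ v₂ (O + t • (A + w - O) - b)) := by
  classical
  have hpair : ∀ x y : ℝ, x • v₁ + y • v₂ = 0 → x = 0 ∧ y = 0 :=
    LinearIndependent.pair_iff.mp hindep
  have hco : ∀ x y : ℝ, InLattice v₁ v₂ (x • v₁ + y • v₂) ↔
      ((∃ p : ℤ, x = (p:ℝ)) ∧ (∃ q : ℤ, y = (q:ℝ))) := by
    intro x y
    constructor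
    · rintro ⟨m, n, h⟩
      have h0 : (x - m) • v₁ + (y - n) • v₂ = 0 := by
        linear_combination (norm := module) h
      obtain ⟨h1, h2⟩ := hpair _ _ h0
      exact ⟨⟨m, by linarith⟩, ⟨n, by linarith⟩⟩
    · rintro ⟨⟨p, rfl⟩, ⟨q, rfl⟩⟩
      exact ⟨p, q, rfl⟩
  obtain ⟨α, β, hAO⟩ : ∃ α β : ℝ, α • v₁ + β • v₂ = A - O :=
    Submodule.mem_span_pair.mp (hspan ▸ Submodule.mem_top)
  have hA : A = O + α • v₁ + β • v₂ := by
    rw [add_assoc, hAO]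
    abel
  -- the four candidate blocking points (half-lattice translates of the midpoint)
  set S : Finset (ℝ × ℝ) :=
    { O + ((α+0)/2) • v₁ + ((β+0)/2) • v₂,
      O + ((α+0)/2) • v₁ + ((β+1)/2) • v₂,
      O + ((α+1)/2) • v₁ + ((β+0)/2) • v₂,
      O + ((α+1)/2) • v₁ + ((β+1)/2) • v₂ } with hS
  set B : Finset (ℝ × ℝ) :=
    S.filter (fun b => ¬ InLattice v₁ v₂ (b - O) ∧ ¬ InLattice v₁ v₂ (b - A)) with hB
  have hScard : S.card ≤ 4 := by
    have h1 := Finset.card_insert_le (O + ((α+0)/2) • v₁ + ((β+0)/2) • v₂)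
      ({ O + ((α+0)/2) • v₁ + ((β+1)/2) • v₂,
         O + ((α+1)/2) • v₁ + ((β+0)/2) • v₂,
         O + ((α+1)/2) • v₁ + ((β+1)/2) • v₂ } : Finset (ℝ × ℝ))
    have h2 := Finset.card_insert_le (O + ((α+0)/2) • v₁ + ((β+1)/2) • v₂)
      ({ O + ((α+1)/2) • v₁ + ((β+0)/2) • v₂,
         O + ((α+1)/2) • v₁ + ((β+1)/2) • v₂ } : Finset (ℝ × ℝ))
    have h3 := Finset.card_insert_le (O + ((α+1)/2) • v₁ + ((β+0)/2) • v₂)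
      ({ O + ((α+1)/2) • v₁ + ((β+1)/2) • v₂ } : Finset (ℝ × ℝ))
    have h4 : ({ O + ((α+1)/2) • v₁ + ((β+1)/2) • v₂ } : Finset (ℝ × ℝ)).card = 1 :=
      Finset.card_singleton _
    rw [hS]
    omega
  refine ⟨B, le_trans (Finset.card_filter_le _ _) hScard, ?_, ?_⟩
  · intro b hb
    exact (Finset.mem_filter.mp hb).2
  · intro w hw hwne
    obtain ⟨m, n, hwmn⟩ := hw
    have hcoords : A + w - O = (α + m) • v₁ + (β + n) • v₂ := by
      rw [hA, hwmn]
      module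
    have hne' : ¬(α + (m:ℝ) = 0 ∧ β + (n:ℝ) = 0) := by
      rintro ⟨h1, h2⟩
      apply hwne
      have h0 : A + w - O = 0 := by
        rw [hcoords, h1, h2]
        module
      exact sub_eq_zero.mp h0
    obtain ⟨t, ht, e, f, he01, hf01, ⟨p, hp⟩, ⟨q, hq⟩, hgood⟩ := aux_block α β m n hne'
    refine ⟨t, ht, O + ((α+e)/2) • v₁ + ((β+f)/2) • v₂, ?_, ?_⟩
    · rw [hB, Finset.mem_filter]
      constructor
      · rw [hS]
        rcases he01 with rfl | rfl <;> rcases hf01 with rfl | rfl <;>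
          simp [Finset.mem_insert]
      · have hbO : O + ((α+e)/2) • v₁ + ((β+f)/2) • v₂ - O
            = ((α+e)/2) • v₁ + ((β+f)/2) • v₂ := by module
        have hbA : O + ((α+e)/2) • v₁ + ((β+f)/2) • v₂ - A
            = ((α+e)/2 - α) • v₁ + ((β+f)/2 - β) • v₂ := by
          rw [hA]
          module
        constructor
        · rw [hbO, hco]
          exact hgood
        · rw [hbA, hco]
          rintro ⟨⟨p', hp'⟩, ⟨q', hq'⟩⟩
          apply hgood
          refine ⟨⟨e - p', ?_⟩, ⟨f - q', ?_⟩⟩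
          · push_cast
            linarith
          · push_cast
            linarith
    · have hexp : O + t • (A + w - O) - (O + ((α+e)/2) • v₁ + ((β+f)/2) • v₂)
          = (t * (α+m) - (α+e)/2) • v₁ + (t * (β+n) - (β+f)/2) • v₂ := by
        rw [hcoords]
        module
      rw [hexp, hco]
      exact ⟨⟨p, hp⟩, ⟨q, hq⟩⟩
end

section
/- The unit square billiard has the finite blocking property: for every pair of points O, A ∈ [0,1]² there exists a finite set B ⊆ [0,1]² with O ∉ B and A ∉ B such that for all O', A' ∈ ℝ² with Φ(O') = O, Φ(A') = A and O' ≠ A', there exists t ∈ (0,1) with Φ(O' + t·(A' − O')) ∈ B. -/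
open Classical in
noncomputable def dlt (c : ℝ) : ℝ := if c = 0 ∨ c = 1 then 2 else min (2*c) (2-2*c)

open Classical in
noncomputable def Fset (φ : ℝ → ℝ) (o a : ℝ) : Finset ℝ :=
  {φ ((o+a)/2), φ ((o-a)/2), φ ((-o+a)/2), φ ((-o-a)/2),
   φ ((o+a)/2+1), φ ((o-a)/2+1), φ ((-o+a)/2+1), φ ((-o-a)/2+1)}

section Aux
variable {φ : ℝ → ℝ}

lemma per_int (hper : ∀ x : ℝ, φ (x + 2) = φ x) :
    ∀ (k : ℤ) (x : ℝ), φ (x + 2*k) = φ x := by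
  have h : ∀ (n : ℕ) (x : ℝ), φ (x + 2*n) = φ x := by
    intro n
    induction n with
    | zero => intro x; norm_num
    | succ n ih =>
        intro x
        have e : x + 2*((n:ℝ)+1) = (x + 2*n) + 2 := by ring
        rw [show ((n+1:ℕ):ℝ) = (n:ℝ)+1 by push_cast; ring, e, hper, ih]
  intro k x
  rcases k.eq_nat_or_neg with ⟨n, rfl | rfl⟩
  · have := h n x
    push_cast
    exact this
  · have h2 := h n (x - 2*n)
    rw [sub_add_cancel] at h2
    push_cast
    rw [show x + 2*(-(n:ℝ)) = x - 2*n by ring]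
    exact h2.symm

lemma phi_rep (hper : ∀ x : ℝ, φ (x + 2) = φ x)
    (habs : ∀ x ∈ Set.Icc (-1 : ℝ) 1, φ x = |x|) (x : ℝ) :
    ∃ k : ℤ, (x - 2*k) ∈ Set.Ico (-1:ℝ) 1 ∧ φ x = |x - 2*k| := by
  refine ⟨⌊(x+1)/2⌋, ⟨?_, ?_⟩, ?_⟩
  · have := Int.floor_le ((x+1)/2)
    linarith
  · have := Int.lt_floor_add_one ((x+1)/2)
    linarith
  · have h1 := per_int hper ⌊(x+1)/2⌋ (x - 2*⌊(x+1)/2⌋)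
    rw [sub_add_cancel] at h1
    rw [h1]
    refine habs _ ⟨?_, ?_⟩
    · have := Int.floor_le ((x+1)/2); linarith
    · have := Int.lt_floor_add_one ((x+1)/2); linarith

lemma phi_mem (hper : ∀ x : ℝ, φ (x + 2) = φ x)
    (habs : ∀ x ∈ Set.Icc (-1 : ℝ) 1, φ x = |x|) (x : ℝ) :
    φ x ∈ Set.Icc (0:ℝ) 1 := by
  obtain ⟨k, hk, hx⟩ := phi_rep hper habs x
  rw [hx]
  exact ⟨abs_nonneg _, abs_le.mpr ⟨hk.1, hk.2.le⟩⟩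

lemma phi_eq (hper : ∀ x : ℝ, φ (x + 2) = φ x)
    (habs : ∀ x ∈ Set.Icc (-1 : ℝ) 1, φ x = |x|) {x y : ℝ} (h : φ x = φ y) :
    ∃ k : ℤ, y = x + 2*k ∨ y = -x + 2*k := by
  obtain ⟨k, _, hkx⟩ := phi_rep hper habs x
  obtain ⟨l, _, hly⟩ := phi_rep hper habs y
  have h' : |x - 2*k| = |y - 2*l| := by rw [← hkx, ← hly, h]
  rcases abs_eq_abs.mp h' with h2 | h2
  · exact ⟨l - k, Or.inl (by push_cast; linarith)⟩
  · exact ⟨l + k, Or.inr (by push_cast; linarith)⟩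

lemma phi_fix (habs : ∀ x ∈ Set.Icc (-1 : ℝ) 1, φ x = |x|) {c : ℝ}
    (hc : c ∈ Set.Icc (0:ℝ) 1) : φ c = c := by
  rw [habs c ⟨by linarith [hc.1], hc.2⟩, abs_of_nonneg hc.1]

lemma class_eq (hper : ∀ x : ℝ, φ (x + 2) = φ x)
    (habs : ∀ x ∈ Set.Icc (-1 : ℝ) 1, φ x = |x|) {c x : ℝ}
    (hc : c ∈ Set.Icc (0:ℝ) 1) (hx : φ x = c) :
    ∃ k : ℤ, x = c + 2*k ∨ x = -c + 2*k :=
  phi_eq hper habs (by rw [phi_fix habs hc, hx])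

lemma dlt_le_two {c : ℝ} (hc : c ∈ Set.Icc (0:ℝ) 1) : dlt c ≤ 2 := by
  unfold dlt
  split
  · exact le_rfl
  · exact le_trans (min_le_left _ _) (by linarith [hc.2])

lemma dlt_pos {c : ℝ} (hc : c ∈ Set.Icc (0:ℝ) 1) : 0 < dlt c := by
  unfold dlt
  split
  · norm_num
  · next h =>
    push_neg at h
    have h0 : 0 < c := lt_of_le_of_ne hc.1 (Ne.symm h.1)
    have h1 : c < 1 := lt_of_le_of_ne hc.2 h.2
    exact lt_min (by linarith) (by linarith)

lemma dlt_le {c : ℝ} (hc : c ∈ Set.Icc (0:ℝ) 1) (k : ℤ) (d : ℝ)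
    (hd : d = 2*k ∨ d = 2*c + 2*k ∨ d = -(2*c) + 2*k) (h0 : d ≠ 0) :
    dlt c ≤ |d| := by
  have hint : ∀ (m : ℤ) (e : ℝ), e = 2*m → e ≠ 0 → (2:ℝ) ≤ |e| := by
    intro m e he hne
    have hm : m ≠ 0 := by rintro rfl; simp at he; exact hne he
    have h1 : (1:ℝ) ≤ |(m:ℝ)| := by
      have := Int.one_le_abs hm
      calc (1:ℝ) = ((1:ℤ):ℝ) := by norm_num
      _ ≤ ((|m|:ℤ):ℝ) := by exact_mod_cast this
      _ = |(m:ℝ)| := by push_cast; ring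
    rw [he, abs_mul]
    rw [show |(2:ℝ)| = 2 by norm_num]
    linarith
  have key : ∀ (m : ℤ) (e : ℝ), e = 2*c + 2*m → e ≠ 0 → dlt c ≤ |e| := by
    intro m e he hne
    by_cases h01 : c = 0 ∨ c = 1
    · have hdc : dlt c = 2 := by unfold dlt; rw [if_pos h01]
      rw [hdc]
      rcases h01 with rfl | rfl
      · exact hint m e (by linarith) hne
      · exact hint (m+1) e (by push_cast; linarith) hne
    · have hdc : dlt c = min (2*c) (2-2*c) := by unfold dlt; rw [if_neg h01]
      push_neg at h01
      have h0c : 0 < c := lt_of_le_of_ne hc.1 (Ne.symm h01.1)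
      have h1c : c < 1 := lt_of_le_of_ne hc.2 h01.2
      rcases le_or_gt 0 (m:ℝ) with hm | hm
      · have : 2*c ≤ e := by linarith
        rw [abs_of_pos (by linarith), hdc]
        exact le_trans (min_le_left _ _) this
      · have hm1 : (m:ℝ) ≤ -1 := by
          have hmz : m < 0 := by exact_mod_cast hm
          have h' : m ≤ -1 := by omega
          have : (m:ℝ) ≤ ((-1:ℤ):ℝ) := Int.cast_le.mpr h'
          simpa using this
        have : e ≤ 2*c - 2 := by linarith
        rw [abs_of_neg (by linarith), hdc]
        have := min_le_right (2*c) (2-2*c)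
        linarith
  rcases hd with hd | hd | hd
  · exact le_trans (dlt_le_two hc) (hint k d hd h0)
  · exact key k d hd h0
  · have := key (-k) (-d) (by push_cast; linarith) (neg_ne_zero.mpr h0)
    rwa [abs_neg] at this

lemma sep (hper : ∀ x : ℝ, φ (x + 2) = φ x)
    (habs : ∀ x ∈ Set.Icc (-1 : ℝ) 1, φ x = |x|) {c x y : ℝ}
    (hc : c ∈ Set.Icc (0:ℝ) 1) (hx : φ x = c) (hy : φ y = c) (hne : x ≠ y) :
    dlt c ≤ |x - y| := by
  obtain ⟨k, hk⟩ := class_eq hper habs hc hx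
  obtain ⟨l, hl⟩ := class_eq hper habs hc hy
  have h0 : x - y ≠ 0 := sub_ne_zero.mpr hne
  rcases hk with hk | hk <;> rcases hl with hl | hl
  · exact dlt_le hc (k - l) _ (Or.inl (by push_cast; linarith)) h0
  · exact dlt_le hc (k - l) _ (Or.inr (Or.inl (by push_cast; linarith))) h0
  · exact dlt_le hc (k - l) _ (Or.inr (Or.inr (by push_cast; linarith))) h0
  · exact dlt_le hc (k - l) _ (Or.inl (by push_cast; linarith)) h0

lemma mid_mem (hper : ∀ x : ℝ, φ (x + 2) = φ x)
    (habs : ∀ x ∈ Set.Icc (-1 : ℝ) 1, φ x = |x|) {o a x y : ℝ}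
    (ho : o ∈ Set.Icc (0:ℝ) 1) (ha : a ∈ Set.Icc (0:ℝ) 1)
    (hx : φ x = o) (hy : φ y = a) : φ ((x+y)/2) ∈ Fset φ o a := by
  have shift : ∀ (m : ℤ) (u : ℝ), φ (u + m) = φ u ∨ φ (u + m) = φ (u+1) := by
    intro m u
    rcases Int.even_or_odd m with ⟨q, hq⟩ | ⟨q, hq⟩
    · left
      have e : u + (m:ℝ) = u + 2*q := by rw [hq]; push_cast; ring
      rw [e, per_int hper q u]
    · right
      have e : u + (m:ℝ) = (u+1) + 2*q := by rw [hq]; push_cast; ring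
      rw [e, per_int hper q (u+1)]
  obtain ⟨k, hk⟩ := class_eq hper habs ho hx
  obtain ⟨l, hl⟩ := class_eq hper habs ha hy
  rcases hk with hk | hk <;> rcases hl with hl | hl
  · have e : (x+y)/2 = (o+a)/2 + ((k+l:ℤ):ℝ) := by rw [hk, hl]; push_cast; ring
    rw [e]
    rcases shift (k+l) ((o+a)/2) with h | h <;> rw [h] <;> simp [Fset]
  · have e : (x+y)/2 = (o-a)/2 + ((k+l:ℤ):ℝ) := by rw [hk, hl]; push_cast; ring
    rw [e]
    rcases shift (k+l) ((o-a)/2) with h | h <;> rw [h] <;> simp [Fset]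
  · have e : (x+y)/2 = (-o+a)/2 + ((k+l:ℤ):ℝ) := by rw [hk, hl]; push_cast; ring
    rw [e]
    rcases shift (k+l) ((-o+a)/2) with h | h <;> rw [h] <;> simp [Fset]
  · have e : (x+y)/2 = (-o-a)/2 + ((k+l:ℤ):ℝ) := by rw [hk, hl]; push_cast; ring
    rw [e]
    rcases shift (k+l) ((-o-a)/2) with h | h <;> rw [h] <;> simp [Fset]

lemma Fset_mem_Icc (hper : ∀ x : ℝ, φ (x + 2) = φ x)
    (habs : ∀ x ∈ Set.Icc (-1 : ℝ) 1, φ x = |x|) {o a : ℝ} :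
    ∀ x ∈ Fset φ o a, x ∈ Set.Icc (0:ℝ) 1 := by
  intro x hx
  simp only [Fset, Finset.mem_insert, Finset.mem_singleton] at hx
  rcases hx with rfl|rfl|rfl|rfl|rfl|rfl|rfl|rfl <;> exact phi_mem hper habs _

lemma block (hper : ∀ x : ℝ, φ (x + 2) = φ x)
    (habs : ∀ x ∈ Set.Icc (-1 : ℝ) 1, φ x = |x|)
    {o₁ o₂ a₁ a₂ : ℝ}
    (ho₁ : o₁ ∈ Set.Icc (0:ℝ) 1) (ho₂ : o₂ ∈ Set.Icc (0:ℝ) 1)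
    (ha₁ : a₁ ∈ Set.Icc (0:ℝ) 1) (ha₂ : a₂ ∈ Set.Icc (0:ℝ) 1)
    {δ : ℝ} (hδ₁ : δ ≤ dlt o₁) (hδ₂ : δ ≤ dlt o₂)
    (hδ₃ : δ ≤ dlt a₁) (hδ₄ : δ ≤ dlt a₂) (hδ : 0 < δ)
    (B : Finset (ℝ × ℝ))
    (hB : ∀ u v : ℝ, u ∈ Fset φ o₁ a₁ → v ∈ Fset φ o₂ a₂ →
      ((u,v) : ℝ×ℝ) ≠ (o₁,o₂) → ((u,v) : ℝ×ℝ) ≠ (a₁,a₂) → ((u,v) : ℝ×ℝ) ∈ B) :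
    ∀ n : ℕ, ∀ X Y : ℝ × ℝ, φ X.1 = o₁ → φ X.2 = o₂ → φ Y.1 = a₁ → φ Y.2 = a₂ →
      X ≠ Y → |Y.1 - X.1| ≤ δ * 2^n → |Y.2 - X.2| ≤ δ * 2^n →
      ∃ t ∈ Set.Ioo (0:ℝ) 1,
        ((φ (X.1 + t*(Y.1-X.1)), φ (X.2 + t*(Y.2-X.2))) : ℝ×ℝ) ∈ B := by
  intro n
  induction n with
  | zero =>
    intro X Y hx1 hx2 hy1 hy2 hne h1 h2
    simp only [pow_zero, mul_one] at h1 h2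
    set M1 := (X.1 + Y.1)/2 with hM1def
    set M2 := (X.2 + Y.2)/2 with hM2def
    have c1 : φ M1 ∈ Fset φ o₁ a₁ := mid_mem hper habs ho₁ ha₁ hx1 hy1
    have c2 : φ M2 ∈ Fset φ o₂ a₂ := mid_mem hper habs ho₂ ha₂ hx2 hy2
    have hcoord : X.1 ≠ Y.1 ∨ X.2 ≠ Y.2 := by
      by_contra h
      push_neg at h
      exact hne (Prod.ext h.1 h.2)
    have habs1 : |M1 - X.1| = |Y.1 - X.1|/2 := by
      rw [show M1 - X.1 = (Y.1 - X.1)/2 by rw [hM1def]; ring, abs_div]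
      norm_num
    have habs2 : |M2 - X.2| = |Y.2 - X.2|/2 := by
      rw [show M2 - X.2 = (Y.2 - X.2)/2 by rw [hM2def]; ring, abs_div]
      norm_num
    have habs1' : |M1 - Y.1| = |Y.1 - X.1|/2 := by
      rw [show M1 - Y.1 = -((Y.1 - X.1)/2) by rw [hM1def]; ring, abs_neg, abs_div]
      norm_num
    have habs2' : |M2 - Y.2| = |Y.2 - X.2|/2 := by
      rw [show M2 - Y.2 = -((Y.2 - X.2)/2) by rw [hM2def]; ring, abs_neg, abs_div]
      norm_num
    have hbO : ((φ M1, φ M2) : ℝ×ℝ) ≠ (o₁, o₂) := by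
      intro h
      rw [Prod.mk.injEq] at h
      rcases hcoord with hc | hc
      · have hMne : M1 ≠ X.1 := by
          intro h'
          apply hc
          rw [hM1def] at h'
          linarith [h']
        have := sep hper habs ho₁ h.1 hx1 hMne
        linarith [abs_nonneg (Y.2 - X.2)]
      · have hMne : M2 ≠ X.2 := by
          intro h'
          apply hc
          rw [hM2def] at h'
          linarith [h']
        have := sep hper habs ho₂ h.2 hx2 hMne
        linarith [abs_nonneg (Y.1 - X.1)]
    have hbA : ((φ M1, φ M2) : ℝ×ℝ) ≠ (a₁, a₂) := by
      intro h
      rw [Prod.mk.injEq] at h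
      rcases hcoord with hc | hc
      · have hMne : M1 ≠ Y.1 := by
          intro h'
          apply hc
          rw [hM1def] at h'
          linarith [h']
        have := sep hper habs ha₁ h.1 hy1 hMne
        linarith [abs_nonneg (Y.2 - X.2)]
      · have hMne : M2 ≠ Y.2 := by
          intro h'
          apply hc
          rw [hM2def] at h'
          linarith [h']
        have := sep hper habs ha₂ h.2 hy2 hMne
        linarith [abs_nonneg (Y.1 - X.1)]
    refine ⟨1/2, by norm_num, ?_⟩
    have e1 : X.1 + (1/2:ℝ)*(Y.1-X.1) = M1 := by rw [hM1def]; ring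
    have e2 : X.2 + (1/2:ℝ)*(Y.2-X.2) = M2 := by rw [hM2def]; ring
    rw [e1, e2]
    exact hB _ _ c1 c2 hbO hbA
  | succ n ih =>
    intro X Y hx1 hx2 hy1 hy2 hne h1 h2
    rw [pow_succ] at h1 h2
    set M1 := (X.1 + Y.1)/2 with hM1def
    set M2 := (X.2 + Y.2)/2 with hM2def
    have c1 : φ M1 ∈ Fset φ o₁ a₁ := mid_mem hper habs ho₁ ha₁ hx1 hy1
    have c2 : φ M2 ∈ Fset φ o₂ a₂ := mid_mem hper habs ho₂ ha₂ hx2 hy2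
    by_cases hbO : ((φ M1, φ M2) : ℝ×ℝ) = (o₁, o₂)
    · -- midpoint is a preimage of O; recurse on second half
      rw [Prod.mk.injEq] at hbO
      have hMY : ((M1, M2) : ℝ×ℝ) ≠ Y := by
        intro h
        rw [Prod.ext_iff] at h
        simp only at h
        apply hne
        apply Prod.ext
        · rw [hM1def] at h; linarith [h.1]
        · rw [hM2def] at h; linarith [h.2]
      have b1 : |Y.1 - (M1, M2).1| ≤ δ * 2^n := by
        simp only
        rw [show Y.1 - M1 = (Y.1 - X.1)/2 by rw [hM1def]; ring, abs_div]
        rw [show |(2:ℝ)| = 2 by norm_num]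
        linarith
      have b2 : |Y.2 - (M1, M2).2| ≤ δ * 2^n := by
        simp only
        rw [show Y.2 - M2 = (Y.2 - X.2)/2 by rw [hM2def]; ring, abs_div]
        rw [show |(2:ℝ)| = 2 by norm_num]
        linarith
      obtain ⟨s, hs, hmem⟩ := ih (M1, M2) Y hbO.1 hbO.2 hy1 hy2 hMY b1 b2
      refine ⟨(1+s)/2, ⟨by linarith [hs.1], by linarith [hs.2]⟩, ?_⟩
      have e1 : X.1 + ((1+s)/2)*(Y.1-X.1) = (M1,M2).1 + s*(Y.1-(M1,M2).1) := by
        simp only [hM1def]; ring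
      have e2 : X.2 + ((1+s)/2)*(Y.2-X.2) = (M1,M2).2 + s*(Y.2-(M1,M2).2) := by
        simp only [hM2def]; ring
      rw [e1, e2]
      exact hmem
    · by_cases hbA : ((φ M1, φ M2) : ℝ×ℝ) = (a₁, a₂)
      · -- midpoint is a preimage of A; recurse on first half
        rw [Prod.mk.injEq] at hbA
        have hXM : X ≠ ((M1, M2) : ℝ×ℝ) := by
          intro h
          rw [Prod.ext_iff] at h
          simp only at h
          apply hne
          apply Prod.ext
          · rw [hM1def] at h; linarith [h.1]
          · rw [hM2def] at h; linarith [h.2]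
        have b1 : |(M1, M2).1 - X.1| ≤ δ * 2^n := by
          simp only
          rw [show M1 - X.1 = (Y.1 - X.1)/2 by rw [hM1def]; ring, abs_div]
          rw [show |(2:ℝ)| = 2 by norm_num]
          linarith
        have b2 : |(M1, M2).2 - X.2| ≤ δ * 2^n := by
          simp only
          rw [show M2 - X.2 = (Y.2 - X.2)/2 by rw [hM2def]; ring, abs_div]
          rw [show |(2:ℝ)| = 2 by norm_num]
          linarith
        obtain ⟨s, hs, hmem⟩ := ih X (M1, M2) hx1 hx2 hbA.1 hbA.2 hXM b1 b2
        refine ⟨s/2, ⟨by linarith [hs.1], by linarith [hs.2]⟩, ?_⟩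
        have e1 : X.1 + (s/2)*(Y.1-X.1) = X.1 + s*((M1,M2).1-X.1) := by
          simp only [hM1def]; ring
        have e2 : X.2 + (s/2)*(Y.2-X.2) = X.2 + s*((M1,M2).2-X.2) := by
          simp only [hM2def]; ring
        rw [e1, e2]
        exact hmem
      · -- good midpoint
        refine ⟨1/2, by norm_num, ?_⟩
        have e1 : X.1 + (1/2:ℝ)*(Y.1-X.1) = M1 := by rw [hM1def]; ring
        have e2 : X.2 + (1/2:ℝ)*(Y.2-X.2) = M2 := by rw [hM2def]; ring
        rw [e1, e2]
        exact hB _ _ c1 c2 hbO hbA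

end Aux

/-- The unit square billiard has the finite blocking property. -/
theorem square_billiard_finite_blocking
    (φ : ℝ → ℝ)
    (hper : ∀ x : ℝ, φ (x + 2) = φ x)
    (habs : ∀ x ∈ Set.Icc (-1 : ℝ) 1, φ x = |x|)
    (Φ : ℝ × ℝ → ℝ × ℝ)
    (hΦ : ∀ p : ℝ × ℝ, Φ p = (φ p.1, φ p.2))
    (O A : ℝ × ℝ)
    (hO : O ∈ Set.Icc (0 : ℝ) 1 ×ˢ Set.Icc (0 : ℝ) 1)
    (hA : A ∈ Set.Icc (0 : ℝ) 1 ×ˢ Set.Icc (0 : ℝ) 1) :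
    ∃ B : Finset (ℝ × ℝ),
      ↑B ⊆ Set.Icc (0 : ℝ) 1 ×ˢ Set.Icc (0 : ℝ) 1 ∧
      O ∉ B ∧ A ∉ B ∧
      ∀ O' A' : ℝ × ℝ, Φ O' = O → Φ A' = A → O' ≠ A' →
        ∃ t ∈ Set.Ioo (0 : ℝ) 1, Φ (O' + t • (A' - O')) ∈ B := by
  classical
  obtain ⟨o₁, o₂⟩ := O
  obtain ⟨a₁, a₂⟩ := A
  have ho₁ : o₁ ∈ Set.Icc (0:ℝ) 1 := hO.1
  have ho₂ : o₂ ∈ Set.Icc (0:ℝ) 1 := hO.2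
  have ha₁ : a₁ ∈ Set.Icc (0:ℝ) 1 := hA.1
  have ha₂ : a₂ ∈ Set.Icc (0:ℝ) 1 := hA.2
  set δ : ℝ := min (min (dlt o₁) (dlt o₂)) (min (dlt a₁) (dlt a₂)) with hδdef
  have hδ : 0 < δ :=
    lt_min (lt_min (dlt_pos ho₁) (dlt_pos ho₂)) (lt_min (dlt_pos ha₁) (dlt_pos ha₂))
  have hδ₁ : δ ≤ dlt o₁ := le_trans (min_le_left _ _) (min_le_left _ _)
  have hδ₂ : δ ≤ dlt o₂ := le_trans (min_le_left _ _) (min_le_right _ _)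
  have hδ₃ : δ ≤ dlt a₁ := le_trans (min_le_right _ _) (min_le_left _ _)
  have hδ₄ : δ ≤ dlt a₂ := le_trans (min_le_right _ _) (min_le_right _ _)
  refine ⟨((Fset φ o₁ a₁) ×ˢ (Fset φ o₂ a₂)) \ {((o₁,o₂) : ℝ×ℝ), (a₁,a₂)}, ?_, ?_, ?_, ?_⟩
  · intro p hp
    rw [Finset.coe_sdiff] at hp
    obtain ⟨hp1, _⟩ := hp
    rw [Finset.mem_coe, Finset.mem_product] at hp1
    exact ⟨Fset_mem_Icc hper habs _ hp1.1, Fset_mem_Icc hper habs _ hp1.2⟩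
  · simp [Finset.mem_sdiff]
  · simp [Finset.mem_sdiff]
  · intro O' A' hO' hA' hne
    rw [hΦ] at hO' hA'
    rw [Prod.mk.injEq] at hO' hA'
    obtain ⟨n, hn⟩ := exists_nat_gt ((max |A'.1 - O'.1| |A'.2 - O'.2|)/δ)
    have hn2 : (n:ℝ) ≤ 2^n := by
      have := Nat.lt_two_pow_self (n := n)
      exact_mod_cast this.le
    have hbound : max |A'.1 - O'.1| |A'.2 - O'.2| ≤ δ * 2^n := by
      have h1 : max |A'.1 - O'.1| |A'.2 - O'.2| < δ * n := by
        rw [div_lt_iff₀ hδ] at hn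
        linarith [hn]
      have h2 : δ * (n:ℝ) ≤ δ * 2^n := by
        apply mul_le_mul_of_nonneg_left hn2 hδ.le
      linarith
    obtain ⟨t, ht, hmem⟩ := block hper habs ho₁ ho₂ ha₁ ha₂ hδ₁ hδ₂ hδ₃ hδ₄ hδ
      (((Fset φ o₁ a₁) ×ˢ (Fset φ o₂ a₂)) \ {((o₁,o₂) : ℝ×ℝ), (a₁,a₂)})
      (by
        intro u v hu hv h3 h4
        rw [Finset.mem_sdiff, Finset.mem_product]
        refine ⟨⟨hu, hv⟩, ?_⟩
        simp only [Finset.mem_insert, Finset.mem_singleton]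
        push_neg
        exact ⟨h3, h4⟩)
      n O' A' hO'.1 hO'.2 hA'.1 hA'.2 hne
      (le_trans (le_max_left _ _) hbound)
      (le_trans (le_max_right _ _) hbound)
    refine ⟨t, ht, ?_⟩
    rw [hΦ]
    have e1 : (O' + t • (A' - O')).1 = O'.1 + t*(A'.1 - O'.1) := by
      simp [Prod.smul_def]
    have e2 : (O' + t • (A' - O')).2 = O'.2 + t*(A'.2 - O'.2) := by
      simp [Prod.smul_def]
    rw [e1, e2]
    exact Finset.mem_coe.mpr hmem
end

section
/- (Fomin's mirror-hall problem.) For every point O ∈ [0,1]² there exists a finite set B ⊆ [0,1]² with O ∉ B such that for all O', O'' ∈ ℝ² with Φ(O') = O, Φ(O'') = O and O' ≠ O'', there exists t ∈ (0,1) with Φ(O' + t·(O'' − O')) ∈ B; that is, finitely many points, all different from O, block every billiard trajectory in the unit square from O back to itself. -/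
open Set

private lemma phi_add_int_two (φ : ℝ → ℝ) (hper : ∀ x : ℝ, φ (x + 2) = φ x)
    (x : ℝ) (k : ℤ) : φ (x + 2 * k) = φ x := by
  induction k using Int.induction_on with
  | zero => simp
  | succ n ih =>
      have : x + 2 * ((n : ℝ) + 1) = (x + 2 * n) + 2 := by ring
      push_cast
      rw [this, hper]
      push_cast at ih
      exact ih
  | pred n ih =>
      have h : φ (x + 2 * (-(n : ℝ) - 1) + 2) = φ (x + 2 * (-(n : ℝ) - 1)) := hper _
      have h2 : x + 2 * (-(n : ℝ) - 1) + 2 = x + 2 * (-(n : ℝ)) := by ring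
      push_cast
      push_cast at ih
      rw [← h, h2, ih]

private lemma phi_preim (φ : ℝ → ℝ) (hper : ∀ x : ℝ, φ (x + 2) = φ x)
    (habs : ∀ x ∈ Set.Icc (-1 : ℝ) 1, φ x = |x|)
    {a : ℝ} (ha0 : 0 ≤ a)
    {x : ℝ} (hx : φ x = a) : ∃ k : ℤ, x = a + 2 * k ∨ x = -a + 2 * k := by
  set k := ⌊(x + 1) / 2⌋ with hk
  have h1 : (k : ℝ) ≤ (x + 1) / 2 := Int.floor_le _
  have h2 : (x + 1) / 2 < k + 1 := Int.lt_floor_add_one _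
  have hy1 : -1 ≤ x - 2 * k := by linarith
  have hy2 : x - 2 * k ≤ 1 := by linarith
  have hv : φ (x - 2 * k) = |x - 2 * k| := habs _ ⟨hy1, hy2⟩
  have hpx : φ (x - 2 * k + 2 * k) = φ (x - 2 * k) := phi_add_int_two φ hper _ k
  have hxx : x - 2 * (k : ℝ) + 2 * k = x := by ring
  rw [hxx] at hpx
  have habs' : |x - 2 * k| = a := by rw [← hv, ← hpx, hx]
  rcases (abs_eq ha0).1 habs' with h | h
  · exact ⟨k, Or.inl (by linarith)⟩
  · exact ⟨k, Or.inr (by linarith)⟩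

private lemma phi_mid (φ : ℝ → ℝ) (hper : ∀ x : ℝ, φ (x + 2) = φ x)
    (habs : ∀ x ∈ Set.Icc (-1 : ℝ) 1, φ x = |x|)
    {a x y : ℝ} (ha0 : 0 ≤ a) (ha1 : a ≤ 1) (hx : φ x = a) (hy : φ y = a) :
    φ ((x + y) / 2) = a ∨ φ ((x + y) / 2) = 1 - a ∨
      φ ((x + y) / 2) = 0 ∨ φ ((x + y) / 2) = 1 := by
  obtain ⟨k, hk⟩ := phi_preim φ hper habs ha0 hx
  obtain ⟨l, hl⟩ := phi_preim φ hper habs ha0 hy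
  have ev : ∀ z : ℝ, -1 ≤ z → z ≤ 1 → ∀ m : ℤ, φ (z + 2 * m) = |z| := by
    intro z h1 h2 m
    rw [phi_add_int_two φ hper, habs z ⟨h1, h2⟩]
  have vA : ∀ m : ℤ, φ (a + 2 * m) = a := fun m => by
    rw [ev a (by linarith) ha1 m, abs_of_nonneg ha0]
  have vB : ∀ m : ℤ, φ (-a + 2 * m) = a := fun m => by
    rw [ev (-a) (by linarith) (by linarith) m, abs_neg, abs_of_nonneg ha0]
  have vC : ∀ m : ℤ, φ ((1 - a) + 2 * m) = 1 - a := fun m => by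
    rw [ev (1 - a) (by linarith) (by linarith) m, abs_of_nonneg (by linarith)]
  have vD : ∀ m : ℤ, φ ((a - 1) + 2 * m) = 1 - a := fun m => by
    rw [ev (a - 1) (by linarith) (by linarith) m, abs_of_nonpos (by linarith)]; ring
  have vE : ∀ m : ℤ, φ ((0 : ℝ) + 2 * m) = 0 := fun m => by
    rw [ev 0 (by norm_num) (by norm_num) m, abs_zero]
  have vF : ∀ m : ℤ, φ ((-1 : ℝ) + 2 * m) = 1 := fun m => by
    rw [ev (-1) (by norm_num) (by norm_num) m, abs_neg, abs_one]
  rcases hk with hk | hk <;> rcases hl with hl | hl <;>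
    rcases Int.even_or_odd (k + l) with ⟨m, hm⟩ | ⟨m, hm⟩
  · left
    have : (x + y) / 2 = a + 2 * (m : ℝ) := by
      have : (k : ℝ) + l = m + m := by exact_mod_cast congrArg (fun z : ℤ => (z : ℝ)) hm
      rw [hk, hl]; push_cast at this ⊢; linarith
    rw [this]; exact_mod_cast vA m
  · right; left
    have : (x + y) / 2 = (a - 1) + 2 * ((m : ℝ) + 1) := by
      have : (k : ℝ) + l = 2 * m + 1 := by exact_mod_cast congrArg (fun z : ℤ => (z : ℝ)) hm
      rw [hk, hl]; push_cast at this ⊢; linarith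
    rw [this]
    have := vD (m + 1); push_cast at this; exact this
  · right; right; left
    have : (x + y) / 2 = (0 : ℝ) + 2 * (m : ℝ) := by
      have : (k : ℝ) + l = m + m := by exact_mod_cast congrArg (fun z : ℤ => (z : ℝ)) hm
      rw [hk, hl]; push_cast at this ⊢; linarith
    rw [this]; exact_mod_cast vE m
  · right; right; right
    have : (x + y) / 2 = (-1 : ℝ) + 2 * ((m : ℝ) + 1) := by
      have : (k : ℝ) + l = 2 * m + 1 := by exact_mod_cast congrArg (fun z : ℤ => (z : ℝ)) hm
      rw [hk, hl]; push_cast at this ⊢; linarith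
    rw [this]
    have := vF (m + 1); push_cast at this; exact this
  · right; right; left
    have : (x + y) / 2 = (0 : ℝ) + 2 * (m : ℝ) := by
      have : (k : ℝ) + l = m + m := by exact_mod_cast congrArg (fun z : ℤ => (z : ℝ)) hm
      rw [hk, hl]; push_cast at this ⊢; linarith
    rw [this]; exact_mod_cast vE m
  · right; right; right
    have : (x + y) / 2 = (-1 : ℝ) + 2 * ((m : ℝ) + 1) := by
      have : (k : ℝ) + l = 2 * m + 1 := by exact_mod_cast congrArg (fun z : ℤ => (z : ℝ)) hm
      rw [hk, hl]; push_cast at this ⊢; linarith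
    rw [this]
    have := vF (m + 1); push_cast at this; exact this
  · left
    have : (x + y) / 2 = -a + 2 * (m : ℝ) := by
      have : (k : ℝ) + l = m + m := by exact_mod_cast congrArg (fun z : ℤ => (z : ℝ)) hm
      rw [hk, hl]; push_cast at this ⊢; linarith
    rw [this]; exact_mod_cast vB m
  · right; left
    have : (x + y) / 2 = (1 - a) + 2 * (m : ℝ) := by
      have : (k : ℝ) + l = 2 * m + 1 := by exact_mod_cast congrArg (fun z : ℤ => (z : ℝ)) hm
      rw [hk, hl]; push_cast at this ⊢; linarith
    rw [this]; exact_mod_cast vC m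


private lemma two_le_abs_two_int (m : ℤ) (hm : (m : ℝ) ≠ 0) : (2 : ℝ) ≤ |2 * (m : ℝ)| := by
  have hm' : m ≠ 0 := by exact_mod_cast hm
  have : (1 : ℝ) ≤ |(m : ℝ)| := by
    rw [← Int.cast_abs]; exact_mod_cast Int.one_le_abs hm'
  rw [abs_mul, abs_two]; linarith

private lemma delta_le (a : ℝ) (ha0 : 0 ≤ a) (ha1 : a ≤ 1) (m : ℤ)
    (hne : 2 * a + 2 * (m : ℝ) ≠ 0) :
    (if 0 < a ∧ a < 1 then min (2 * a) (2 - 2 * a) else 2) ≤ |2 * a + 2 * (m : ℝ)| := by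
  split_ifs with h
  · rcases le_or_gt 0 m with hm | hm
    · have hm' : (0 : ℝ) ≤ m := by exact_mod_cast hm
      rw [abs_of_pos (by nlinarith [h.1])]
      have := min_le_left (2 * a) (2 - 2 * a); linarith
    · have hmz : m + 1 ≤ 0 := hm
      have hm' : (m : ℝ) + 1 ≤ 0 := by exact_mod_cast hmz
      rw [abs_of_neg (by nlinarith [h.2] : 2 * a + 2 * (m:ℝ) < 0)]
      have := min_le_right (2 * a) (2 - 2 * a); linarith
  · push_neg at h
    rcases lt_or_ge 0 a with hpos | hz
    · have ha : a = 1 := le_antisymm ha1 (h hpos)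
      have hm1 : ((m + 1 : ℤ) : ℝ) ≠ 0 := by push_cast; intro hh; apply hne; rw [ha]; linarith
      have h2 := two_le_abs_two_int (m + 1) hm1
      have he : |2 * ((m : ℝ) + 1)| = |2 * a + 2 * m| := by rw [ha]; ring_nf
      push_cast at h2; rw [he] at h2; exact h2
    · have ha : a = 0 := le_antisymm hz ha0
      have hm0 : (m : ℝ) ≠ 0 := by intro hh; apply hne; rw [ha, hh]; ring
      have h2 := two_le_abs_two_int m hm0
      have he : |2 * (m : ℝ)| = |2 * a + 2 * m| := by rw [ha]; ring_nf
      rw [he] at h2; exact h2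





private lemma phi_sep (φ : ℝ → ℝ) (hper : ∀ x : ℝ, φ (x + 2) = φ x)
    (habs : ∀ x ∈ Set.Icc (-1 : ℝ) 1, φ x = |x|)
    {a : ℝ} (ha0 : 0 ≤ a) (ha1 : a ≤ 1) :
    ∃ δ : ℝ, 0 < δ ∧ ∀ x y : ℝ, φ x = a → φ y = a → x ≠ y → δ ≤ |x - y| := by
  refine ⟨if 0 < a ∧ a < 1 then min (2 * a) (2 - 2 * a) else 2, ?_, ?_⟩
  · split_ifs with h
    · exact lt_min (by linarith [h.1]) (by linarith [h.2])
    · norm_num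
  · have hle2 : (if 0 < a ∧ a < 1 then min (2 * a) (2 - 2 * a) else 2) ≤ 2 := by
      split_ifs with h
      · exact le_trans (min_le_left _ _) (by linarith [ha1])
      · exact le_refl 2
    intro x y hx hy hxy
    obtain ⟨k, hk⟩ := phi_preim φ hper habs ha0 hx
    obtain ⟨l, hl⟩ := phi_preim φ hper habs ha0 hy
    have hsub : x - y ≠ 0 := sub_ne_zero.2 hxy
    rcases hk with hk | hk <;> rcases hl with hl | hl
    · -- x - y = 2(k - l)
      have he : x - y = 2 * ((k - l : ℤ) : ℝ) := by rw [hk, hl]; push_cast; ring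
      have hne : ((k - l : ℤ) : ℝ) ≠ 0 := by
        intro hh; apply hsub; rw [he, hh]; ring
      rw [he]; exact le_trans hle2 (two_le_abs_two_int _ hne)
    · -- x - y = 2a + 2(k - l)
      have he : x - y = 2 * a + 2 * ((k - l : ℤ) : ℝ) := by rw [hk, hl]; push_cast; ring
      have hne : 2 * a + 2 * ((k - l : ℤ) : ℝ) ≠ 0 := by rw [← he]; exact hsub
      rw [he]; exact delta_le a ha0 ha1 _ hne
    · -- x - y = -(2a + 2(l - k))
      have he : x - y = -(2 * a + 2 * ((l - k : ℤ) : ℝ)) := by rw [hk, hl]; push_cast; ring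
      have hne : 2 * a + 2 * ((l - k : ℤ) : ℝ) ≠ 0 := by
        intro hh; apply hsub; rw [he, hh]; ring
      rw [he, abs_neg]; exact delta_le a ha0 ha1 _ hne
    · have he : x - y = 2 * ((k - l : ℤ) : ℝ) := by rw [hk, hl]; push_cast; ring
      have hne : ((k - l : ℤ) : ℝ) ≠ 0 := by
        intro hh; apply hsub; rw [he, hh]; ring
      rw [he]; exact le_trans hle2 (two_le_abs_two_int _ hne)




/-- Fomin's mirror-hall problem.  Here `φ : ℝ → ℝ` is the (unique) 2-periodic
function with `φ x = |x|` on `[-1, 1]`, and `Φ (x, y) = (φ x, φ y)` is the folding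
map `ℝ² → [0,1]²`; billiard trajectories in the unit square from `O` back to `O`
are exactly the paths `t ↦ Φ (O' + t • (O'' − O'))` with `Φ O' = O`, `Φ O'' = O`,
`O' ≠ O''`.  For every `O ∈ [0,1]²` there is a finite set `B ⊆ [0,1]²` with
`O ∉ B` meeting the interior of every such trajectory: finitely many points, all
different from `O`, block every billiard trajectory in the unit square from `O`
back to itself. -/
theorem square_billiard_self_blocking
    (φ : ℝ → ℝ)
    (hper : ∀ x : ℝ, φ (x + 2) = φ x)
    (habs : ∀ x ∈ Set.Icc (-1 : ℝ) 1, φ x = |x|)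
    (Φ : ℝ × ℝ → ℝ × ℝ)
    (hΦ : ∀ p : ℝ × ℝ, Φ p = (φ p.1, φ p.2))
    (O : ℝ × ℝ)
    (hO : O ∈ Set.Icc (0 : ℝ) 1 ×ˢ Set.Icc (0 : ℝ) 1) :
    ∃ B : Finset (ℝ × ℝ),
      ↑B ⊆ Set.Icc (0 : ℝ) 1 ×ˢ Set.Icc (0 : ℝ) 1 ∧
      O ∉ B ∧
      ∀ O' O'' : ℝ × ℝ, Φ O' = O → Φ O'' = O → O' ≠ O'' →
        ∃ t ∈ Set.Ioo (0 : ℝ) 1, Φ (O' + t • (O'' - O')) ∈ B := by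
  classical
  obtain ⟨hOa, hOb⟩ := hO
  rw [Set.mem_Icc] at hOa hOb
  set a := O.1 with ha
  set b := O.2 with hb
  obtain ⟨ha0, ha1⟩ := hOa
  obtain ⟨hb0, hb1⟩ := hOb
  set B : Finset (ℝ × ℝ) :=
    (({a, 1 - a, 0, 1} : Finset ℝ) ×ˢ ({b, 1 - b, 0, 1} : Finset ℝ)).erase O with hB
  refine ⟨B, ?_, Finset.notMem_erase _ _, ?_⟩
  · intro p hp
    simp only [hB, Finset.coe_erase, Set.mem_diff, Finset.mem_coe, Finset.mem_product,
      Finset.mem_insert, Finset.mem_singleton] at hp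
    obtain ⟨⟨h1, h2⟩, -⟩ := hp
    constructor
    · rw [Set.mem_Icc]
      rcases h1 with h | h | h | h <;> rw [h] <;> constructor <;> linarith
    · rw [Set.mem_Icc]
      rcases h2 with h | h | h | h <;> rw [h] <;> constructor <;> linarith
  · -- preimage condition
    have hΦeq : ∀ p : ℝ × ℝ, Φ p = O ↔ (φ p.1 = a ∧ φ p.2 = b) := by
      intro p; rw [hΦ, Prod.ext_iff]
    obtain ⟨δa, hδa, hsepa⟩ := phi_sep φ hper habs ha0 ha1
    obtain ⟨δb, hδb, hsepb⟩ := phi_sep φ hper habs hb0 hb1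
    set δ := min δa δb with hδdef
    have hδ : 0 < δ := lt_min hδa hδb
    have key : ∀ n : ℕ, ∀ p q : ℝ × ℝ, φ p.1 = a → φ p.2 = b → φ q.1 = a → φ q.2 = b →
        p ≠ q → max |p.1 - q.1| |p.2 - q.2| < δ * 2 ^ n →
        ∃ t ∈ Set.Ioo (0 : ℝ) 1, Φ (p + t • (q - p)) ∈ B := by
      intro n
      induction n with
      | zero =>
        intro p q hp1 hp2 hq1 hq2 hpq hd
        exfalso
        rcases (by rwa [Ne, Prod.ext_iff, not_and_or] at hpq :
            p.1 ≠ q.1 ∨ p.2 ≠ q.2) with h | h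
        · have := hsepa p.1 q.1 hp1 hq1 h
          have h2 := le_max_left |p.1 - q.1| |p.2 - q.2|
          have h3 := min_le_left δa δb
          simp only [pow_zero, mul_one] at hd
          linarith
        · have := hsepb p.2 q.2 hp2 hq2 h
          have h2 := le_max_right |p.1 - q.1| |p.2 - q.2|
          have h3 := min_le_right δa δb
          simp only [pow_zero, mul_one] at hd
          linarith
      | succ n ih =>
        intro p q hp1 hp2 hq1 hq2 hpq hd
        set M : ℝ × ℝ := p + (2⁻¹ : ℝ) • (q - p) with hM
        have hM1 : M.1 = (p.1 + q.1) / 2 := by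
          simp only [hM, Prod.fst_add, Prod.smul_fst, Prod.fst_sub, smul_eq_mul]; ring
        have hM2 : M.2 = (p.2 + q.2) / 2 := by
          simp only [hM, Prod.snd_add, Prod.smul_snd, Prod.snd_sub, smul_eq_mul]; ring
        have hval1 := phi_mid φ hper habs ha0 ha1 hp1 hq1
        have hval2 := phi_mid φ hper habs hb0 hb1 hp2 hq2
        rw [← hM1] at hval1
        rw [← hM2] at hval2
        by_cases hMO : Φ M = O
        · -- recurse on (p, M)
          obtain ⟨hMa, hMb⟩ := (hΦeq M).1 hMO
          have hMp : p ≠ M := by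
            intro hh
            apply hpq
            have : (2⁻¹ : ℝ) • (q - p) = 0 := by
              have := hh; rw [hM] at this
              have h0 : p + (2⁻¹ : ℝ) • (q - p) - p = 0 := by rw [← this]; ring_nf -- check
              calc (2⁻¹ : ℝ) • (q - p) = p + (2⁻¹ : ℝ) • (q - p) - p := by abel
                _ = 0 := h0
            have hqp : q - p = 0 := by
              have := smul_eq_zero.1 this
              rcases this with h | h
              · norm_num at h
              · exact h
            have := sub_eq_zero.1 hqp
            exact this.symm
          have hdist : max |p.1 - M.1| |p.2 - M.2| < δ * 2 ^ n := by
            have e1 : |p.1 - M.1| = |p.1 - q.1| / 2 := by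
              rw [hM1, show p.1 - (p.1 + q.1) / 2 = (p.1 - q.1) / 2 by ring, abs_div]
              norm_num
            have e2 : |p.2 - M.2| = |p.2 - q.2| / 2 := by
              rw [hM2, show p.2 - (p.2 + q.2) / 2 = (p.2 - q.2) / 2 by ring, abs_div]
              norm_num
            rw [e1, e2]
            have h1 := le_max_left |p.1 - q.1| |p.2 - q.2|
            have h2 := le_max_right |p.1 - q.1| |p.2 - q.2|
            have hd' : max |p.1 - q.1| |p.2 - q.2| < δ * 2 ^ n * 2 := by
              rw [show δ * 2 ^ n * 2 = δ * 2 ^ (n + 1) by ring]; exact hd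
            apply max_lt <;> [skip; skip] <;> linarith
          obtain ⟨t', ht', hmem⟩ := ih p M hp1 hp2 hMa hMb hMp hdist
          refine ⟨t' / 2, ⟨by linarith [ht'.1], by linarith [ht'.2]⟩, ?_⟩
          have harg : p + (t' / 2) • (q - p) = p + t' • (M - p) := by
            have : M - p = (2⁻¹ : ℝ) • (q - p) := by rw [hM]; abel
            rw [this, smul_smul]
            norm_num
            ring_nf
          rw [harg]
          exact hmem
        · refine ⟨2⁻¹, ⟨by norm_num, by norm_num⟩, ?_⟩
          rw [← hM]
          rw [hB, Finset.mem_erase]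
          refine ⟨hMO, ?_⟩
          rw [hΦ M, Finset.mem_product]
          constructor
          · simp only [Finset.mem_insert, Finset.mem_singleton]
            tauto
          · simp only [Finset.mem_insert, Finset.mem_singleton]
            tauto
    intro O' O'' h1 h2 hne
    obtain ⟨h1a, h1b⟩ := (hΦeq O').1 h1
    obtain ⟨h2a, h2b⟩ := (hΦeq O'').1 h2
    obtain ⟨n, hn⟩ := pow_unbounded_of_one_lt
      (max |O'.1 - O''.1| |O'.2 - O''.2| / δ) (one_lt_two (α := ℝ))
    have hlt : max |O'.1 - O''.1| |O'.2 - O''.2| < δ * 2 ^ n := by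
      rw [div_lt_iff₀ hδ] at hn; linarith
    exact key n O' O'' h1a h1b h2a h2b hne hlt
end

section
/- Let w₁, w₂ be positive real numbers with w₁/w₂ irrational. Let q : ℕ → ℤ be strictly increasing, let p : ℕ → ℤ be such that the sequence n ↦ p(n)·w₂ − q(n)·w₁ is bounded, let k : ℕ → ℤ be arbitrary, and let c be a nonzero real number. Then the sequence n ↦ c·(q(n)·w₁ + p(n)·w₂) − k(n)·w₁ is not constant. -/
/-- Arithmetic core of the two-cylinder lemma.  Let `w₁, w₂ > 0` with `w₁/w₂`
irrational, let `q : ℕ → ℤ` be strictly increasing, let `p : ℕ → ℤ` be such that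
`n ↦ p n · w₂ − q n · w₁` is bounded, let `k : ℕ → ℤ` be arbitrary and `c ≠ 0`.
Then `n ↦ c·(q n · w₁ + p n · w₂) − k n · w₁` is not constant. -/
theorem two_cylinder_arithmetic_core (w₁ w₂ : ℝ) (hw₁ : 0 < w₁) (hw₂ : 0 < w₂)
    (hirr : Irrational (w₁ / w₂))
    (q p k : ℕ → ℤ) (hq : StrictMono q)
    (hbdd : ∃ l : ℝ, ∀ n : ℕ, |(p n : ℝ) * w₂ - (q n : ℝ) * w₁| ≤ l)
    (c : ℝ) (hc : c ≠ 0) :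
    ¬ ∀ m n : ℕ,
        c * ((q m : ℝ) * w₁ + (p m : ℝ) * w₂) - (k m : ℝ) * w₁ =
        c * ((q n : ℝ) * w₁ + (p n : ℝ) * w₂) - (k n : ℝ) * w₁ := by
  intro h
  obtain ⟨l, hl⟩ := hbdd
  -- key consequence of irrationality
  have key : ∀ a b : ℤ, (a : ℝ) * w₁ = (b : ℝ) * w₂ → a = 0 ∧ b = 0 := by
    intro a b hab
    have ha : a = 0 := by
      by_contra ha
      apply hirr
      have ha' : (a : ℝ) ≠ 0 := Int.cast_ne_zero.mpr ha
      refine ⟨(b : ℚ) / (a : ℚ), ?_⟩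
      push_cast
      rw [div_eq_div_iff ha' (ne_of_gt hw₂)]
      linarith [hab]
    refine ⟨ha, ?_⟩
    subst ha
    have h0 : (b : ℝ) * w₂ = 0 := by push_cast at hab; linarith
    have hb : (b : ℝ) = 0 := by
      rcases mul_eq_zero.mp h0 with h' | h'
      · exact h'
      · exact absurd h' (ne_of_gt hw₂)
    exact_mod_cast hb
  -- q grows at least linearly
  have qge : ∀ n : ℕ, q 0 + n ≤ q n := by
    intro n
    induction n with
    | zero => simp
    | succ n ih =>
      have h' : q n < q (n + 1) := hq (by omega)
      push_cast
      push_cast at ih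
      omega
  -- differences relative to index 0
  have E : ∀ n : ℕ, c * (((q n - q 0 : ℤ) : ℝ) * w₁ + ((p n - p 0 : ℤ) : ℝ) * w₂)
      = ((k n - k 0 : ℤ) : ℝ) * w₁ := by
    intro n
    push_cast
    linear_combination h n 0
  have hA1pos : 0 < q 1 - q 0 := by
    have : q 0 < q 1 := hq (by omega)
    omega
  have hK1ne : k 1 - k 0 ≠ 0 := by
    intro hK
    have e1 := E 1
    rw [hK] at e1
    push_cast at e1
    have hz : ((q 1 : ℝ) - q 0) * w₁ + ((p 1 : ℝ) - p 0) * w₂ = 0 := by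
      rcases mul_eq_zero.mp (by linarith : c * (((q 1 : ℝ) - q 0) * w₁ + ((p 1 : ℝ) - p 0) * w₂) = 0) with h' | h'
      · exact absurd h' hc
      · exact h'
    have h0 : ((q 1 - q 0 : ℤ) : ℝ) * w₁ = ((-(p 1 - p 0) : ℤ) : ℝ) * w₂ := by
      push_cast; linarith
    have := (key _ _ h0).1
    omega
  -- cross relations with the pair (1, 0)
  have cross : ∀ n : ℕ, (k n - k 0) * (q 1 - q 0) = (k 1 - k 0) * (q n - q 0) ∧
      (k n - k 0) * (p 1 - p 0) = (k 1 - k 0) * (p n - p 0) := by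
    intro n
    have e1 := E 1
    have en := E n
    push_cast at e1 en
    have hcomb : c * ((((k n - k 0) * (q 1 - q 0) - (k 1 - k 0) * (q n - q 0) : ℤ) : ℝ) * w₁
        - (((k 1 - k 0) * (p n - p 0) - (k n - k 0) * (p 1 - p 0) : ℤ) : ℝ) * w₂) = 0 := by
      push_cast
      linear_combination ((k n : ℝ) - k 0) * e1 - ((k 1 : ℝ) - k 0) * en
    have h0 : (((k n - k 0) * (q 1 - q 0) - (k 1 - k 0) * (q n - q 0) : ℤ) : ℝ) * w₁
        = (((k 1 - k 0) * (p n - p 0) - (k n - k 0) * (p 1 - p 0) : ℤ) : ℝ) * w₂ := by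
      rcases mul_eq_zero.mp hcomb with h' | h'
      · exact absurd h' hc
      · linarith
    obtain ⟨ha, hb⟩ := key _ _ h0
    constructor <;> omega
  -- hence (q 1 - q 0) * (p n - p 0) = (q n - q 0) * (p 1 - p 0)
  have prop : ∀ n : ℕ, (q 1 - q 0) * (p n - p 0) = (q n - q 0) * (p 1 - p 0) := by
    intro n
    obtain ⟨h1, h2⟩ := cross n
    have hz : (k 1 - k 0) * ((q 1 - q 0) * (p n - p 0) - (q n - q 0) * (p 1 - p 0)) = 0 := by
      linear_combination (p 1 - p 0) * h1 - (q 1 - q 0) * h2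
    rcases mul_eq_zero.mp hz with h' | h'
    · exact absurd h' hK1ne
    · omega
  -- boundedness
  have hbnd : ∀ n : ℕ, |((p n : ℝ) - p 0) * w₂ - ((q n : ℝ) - q 0) * w₁| ≤ 2 * l := by
    intro n
    have h1 := hl n
    have h2 := hl 0
    have heq : ((p n : ℝ) - p 0) * w₂ - ((q n : ℝ) - q 0) * w₁
        = ((p n : ℝ) * w₂ - (q n : ℝ) * w₁) - ((p 0 : ℝ) * w₂ - (q 0 : ℝ) * w₁) := by ring
    rw [heq]
    calc |_ - _| ≤ |(p n : ℝ) * w₂ - (q n : ℝ) * w₁| + |(p 0 : ℝ) * w₂ - (q 0 : ℝ) * w₁| :=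
          abs_sub _ _
      _ ≤ l + l := add_le_add h1 h2
      _ = 2 * l := by ring
  set B : ℝ := ((p 1 : ℝ) - p 0) * w₂ - ((q 1 : ℝ) - q 0) * w₁ with hBdef
  by_cases hb1 : B = 0
  · have h0 : ((q 1 - q 0 : ℤ) : ℝ) * w₁ = ((p 1 - p 0 : ℤ) : ℝ) * w₂ := by
      push_cast
      simp only [hBdef] at hb1
      linarith
    have := (key _ _ h0).1
    omega
  · have habs : 0 < |B| := abs_pos.mpr hb1
    obtain ⟨n, hn⟩ := exists_nat_gt (((q 1 : ℝ) - q 0) * (2 * l) / |B|)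
    have hAn : (n : ℝ) ≤ (q n : ℝ) - q 0 := by
      have h' : (n : ℤ) ≤ q n - q 0 := by have := qge n; omega
      have h'' : ((n : ℤ) : ℝ) ≤ ((q n - q 0 : ℤ) : ℝ) := Int.cast_le.mpr h'
      push_cast at h''
      linarith
    have hc' : ((q 1 : ℝ) - q 0) * ((p n : ℝ) - p 0) = ((q n : ℝ) - q 0) * ((p 1 : ℝ) - p 0) := by
      have := prop n
      have := congrArg (fun z : ℤ => (z : ℝ)) this
      push_cast at this
      linarith
    have hrel : ((q 1 : ℝ) - q 0) * (((p n : ℝ) - p 0) * w₂ - ((q n : ℝ) - q 0) * w₁)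
        = ((q n : ℝ) - q 0) * B := by
      simp only [hBdef]
      linear_combination w₂ * hc'
    have hA1r : (0 : ℝ) < (q 1 : ℝ) - q 0 := by
      have h'' : ((0 : ℤ) : ℝ) < ((q 1 - q 0 : ℤ) : ℝ) := Int.cast_lt.mpr hA1pos
      push_cast at h''
      linarith
    have hQn : (0 : ℝ) ≤ (q n : ℝ) - q 0 := le_trans (Nat.cast_nonneg n) hAn
    have h2 : |((q n : ℝ) - q 0) * B| ≤ ((q 1 : ℝ) - q 0) * (2 * l) := by
      rw [← hrel, abs_mul, abs_of_pos hA1r]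
      exact mul_le_mul_of_nonneg_left (hbnd n) (le_of_lt hA1r)
    have h3 : (n : ℝ) * |B| ≤ ((q 1 : ℝ) - q 0) * (2 * l) := by
      calc (n : ℝ) * |B| ≤ ((q n : ℝ) - q 0) * |B| :=
            mul_le_mul_of_nonneg_right hAn (le_of_lt habs)
        _ = |((q n : ℝ) - q 0) * B| := by rw [abs_mul, abs_of_nonneg hQn]
        _ ≤ ((q 1 : ℝ) - q 0) * (2 * l) := h2
    rw [div_lt_iff₀ habs] at hn
    linarith
end

section
/- Let w₁, w₂ be positive real numbers with w₁/w₂ irrational. Let q : ℕ → ℤ be strictly increasing, let p : ℕ → ℤ be such that p(n)/q(n) converges to an irrational real number λ, let k : ℕ → ℤ be arbitrary, and let c be a nonzero real number. Then the sequence n ↦ c·(q(n)·w₁ + p(n)·w₂) − k(n)·w₁ is not constant. -/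
/-- Arithmetic core of the refinement of the two-cylinder lemma.  Let `w₁, w₂ > 0`
with `w₁/w₂` irrational, let `q : ℕ → ℤ` be strictly increasing, let `p : ℕ → ℤ` be
such that `p n / q n` converges to an irrational real number `lam`, let `k : ℕ → ℤ`
be arbitrary and `c ≠ 0`.  Then `n ↦ c·(q n · w₁ + p n · w₂) − k n · w₁` is not
constant. -/
theorem two_cylinder_arithmetic_core_refined (w₁ w₂ : ℝ) (hw₁ : 0 < w₁) (hw₂ : 0 < w₂)
    (hirr : Irrational (w₁ / w₂))
    (q p k : ℕ → ℤ) (hq : StrictMono q)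
    (lam : ℝ) (hlam : Irrational lam)
    (hconv : Filter.Tendsto (fun n : ℕ => (p n : ℝ) / (q n : ℝ)) Filter.atTop (nhds lam))
    (c : ℝ) (hc : c ≠ 0) :
    ¬ ∀ m n : ℕ,
        c * ((q m : ℝ) * w₁ + (p m : ℝ) * w₂) - (k m : ℝ) * w₁ =
        c * ((q n : ℝ) * w₁ + (p n : ℝ) * w₂) - (k n : ℝ) * w₁ := by
  intro h
  set α : ℝ := w₁ / w₂ with hα
  have hw₂0 : w₂ ≠ 0 := ne_of_gt hw₂
  -- helper: integer linear relations on α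
  have hlin : ∀ a b : ℤ, (a : ℝ) * α = (b : ℝ) → a = 0 ∧ b = 0 := by
    intro a b hab
    have ha : a = 0 := by
      by_contra ha
      have ha' : (a : ℝ) ≠ 0 := Int.cast_ne_zero.mpr ha
      have : α = ((b : ℚ) / (a : ℚ) : ℚ) := by
        push_cast
        field_simp
        linarith [hab]
      exact (Rat.not_irrational _) (this ▸ hirr)
    refine ⟨ha, ?_⟩
    have : (b : ℝ) = 0 := by rw [← hab, ha]; simp
    exact_mod_cast this
  -- the key equation
  have key : ∀ n : ℕ, c * ((q n - q 0 : ℤ) * α + (p n - p 0 : ℤ)) = ((k n - k 0 : ℤ) : ℝ) * α := by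
    intro n
    have h0 := h n 0
    have hmul : c * ((q n - q 0 : ℤ) * w₁ + (p n - p 0 : ℤ) * w₂) = ((k n - k 0 : ℤ) : ℝ) * w₁ := by
      push_cast
      nlinarith [h0]
    rw [hα]
    field_simp
    push_cast at hmul ⊢
    nlinarith [hmul]
  have hApos : ∀ n : ℕ, 1 ≤ n → 0 < q n - q 0 := fun n hn => sub_pos.mpr (hq (by omega))
  -- K n ≠ 0 for n ≥ 1
  have hKne : ∀ n : ℕ, 1 ≤ n → k n - k 0 ≠ 0 := by
    intro n hn hK
    have := key n
    rw [hK] at this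
    simp at this
    rcases this with h1 | h1
    · exact hc h1
    · have : ((q n - q 0 : ℤ) : ℝ) * α = ((-(p n - p 0) : ℤ) : ℝ) := by push_cast; linarith
      have h2 := (hlin _ _ this).1
      have h3 := hApos n hn
      omega
  -- cross relation: P n * A 1 = A n * P 1 for n ≥ 1
  have hcross : ∀ n : ℕ, 1 ≤ n → (p n - p 0) * (q 1 - q 0) = (q n - q 0) * (p 1 - p 0) := by
    intro n hn
    have h1 := key 1
    have h2 := key n
    have hK1 := hKne 1 le_rfl
    -- c * K n * (A1 α + P1) = c * K1 * (An α + Pn)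
    have hc' : c * (((k n - k 0 : ℤ) : ℝ) * ((q 1 - q 0 : ℤ) * α + (p 1 - p 0 : ℤ))
        - ((k 1 - k 0 : ℤ) : ℝ) * ((q n - q 0 : ℤ) * α + (p n - p 0 : ℤ))) = 0 := by
      linear_combination ((k n - k 0 : ℤ) : ℝ) * h1 - ((k 1 - k 0 : ℤ) : ℝ) * h2
    have heq : (((k n - k 0) * (q 1 - q 0) - (k 1 - k 0) * (q n - q 0) : ℤ) : ℝ) * α
        = (((k 1 - k 0) * (p n - p 0) - (k n - k 0) * (p 1 - p 0) : ℤ) : ℝ) := by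
      have := mul_eq_zero.mp hc'
      rcases this with h' | h'
      · exact absurd h' hc
      · push_cast
        push_cast at h'
        nlinarith [h']
    obtain ⟨ha, hb⟩ := hlin _ _ heq
    have hK1' : (k 1 - k 0) ≠ 0 := hK1
    have e1 : (k n - k 0) * (q 1 - q 0) = (k 1 - k 0) * (q n - q 0) := by omega
    have e2 : (k 1 - k 0) * (p n - p 0) = (k n - k 0) * (p 1 - p 0) := by omega
    have : (k 1 - k 0) * ((p n - p 0) * (q 1 - q 0)) = (k 1 - k 0) * ((q n - q 0) * (p 1 - p 0)) := by
      calc (k 1 - k 0) * ((p n - p 0) * (q 1 - q 0))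
          = ((k 1 - k 0) * (p n - p 0)) * (q 1 - q 0) := by ring
        _ = ((k n - k 0) * (p 1 - p 0)) * (q 1 - q 0) := by rw [e2]
        _ = ((k n - k 0) * (q 1 - q 0)) * (p 1 - p 0) := by ring
        _ = ((k 1 - k 0) * (q n - q 0)) * (p 1 - p 0) := by rw [e1]
        _ = (k 1 - k 0) * ((q n - q 0) * (p 1 - p 0)) := by ring
    exact mul_left_cancel₀ hK1' this
  set A1 : ℤ := q 1 - q 0 with hA1
  set P1 : ℤ := p 1 - p 0 with hP1
  have hA1pos : 0 < A1 := hApos 1 le_rfl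
  have hA1ne : (A1 : ℝ) ≠ 0 := Int.cast_ne_zero.mpr (by omega)
  set D : ℤ := p 0 * A1 - q 0 * P1 with hD
  have hDconst : ∀ n : ℕ, 1 ≤ n → p n * A1 - q n * P1 = D := by
    intro n hn
    have := hcross n hn
    rw [hD, hA1, hP1] at *
    nlinarith [this]
  -- q n → ∞
  have hqgrow : ∀ n : ℕ, q 0 + n ≤ q n := by
    intro n
    induction n with
    | zero => simp
    | succ m ih =>
      have h2 : q m < q (m + 1) := hq (by omega)
      push_cast at ih ⊢
      omega
  have hqtop : Filter.Tendsto (fun n : ℕ => (q n : ℝ)) Filter.atTop Filter.atTop := by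
    apply Filter.tendsto_atTop_mono (fun n => ?_)
      (Filter.tendsto_atTop_add_const_left _ ((q 0 : ℝ)) tendsto_natCast_atTop_atTop)
    exact_mod_cast hqgrow n
  -- the limit is P1/A1
  have hlim : Filter.Tendsto (fun n : ℕ => (p n : ℝ) / (q n : ℝ)) Filter.atTop
      (nhds ((P1 : ℝ) / (A1 : ℝ))) := by
    have h0 : Filter.Tendsto (fun n : ℕ => (P1 : ℝ) / (A1 : ℝ) + (D : ℝ) / ((q n : ℝ) * (A1 : ℝ)))
        Filter.atTop (nhds ((P1 : ℝ) / (A1 : ℝ))) := by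
      have : Filter.Tendsto (fun n : ℕ => (D : ℝ) / ((q n : ℝ) * (A1 : ℝ))) Filter.atTop (nhds 0) := by
        apply Filter.Tendsto.div_atTop tendsto_const_nhds
        exact Filter.Tendsto.atTop_mul_const (by exact_mod_cast hA1pos) hqtop
      simpa using tendsto_const_nhds.add this
    apply h0.congr'
    have hev : ∀ᶠ n : ℕ in Filter.atTop, 1 ≤ n ∧ (1 : ℝ) ≤ (q n : ℝ) := by
      filter_upwards [Filter.eventually_ge_atTop 1, hqtop.eventually_ge_atTop 1] with n h1 h2
      exact ⟨h1, h2⟩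
    filter_upwards [hev] with n ⟨hn1, hnq⟩
    have hqne : (q n : ℝ) ≠ 0 := by linarith
    have hDn := hDconst n hn1
    have hDn' : (p n : ℝ) * (A1 : ℝ) - (q n : ℝ) * (P1 : ℝ) = (D : ℝ) := by exact_mod_cast hDn
    field_simp
    linear_combination (-1 : ℝ) * hDn'
  have hlam_eq : lam = (P1 : ℝ) / (A1 : ℝ) := tendsto_nhds_unique hconv hlim
  have : lam = ((P1 : ℚ) / (A1 : ℚ) : ℚ) := by rw [hlam_eq]; push_cast; ring
  exact (Rat.not_irrational _) (this ▸ hlam)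
end
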